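/- arXiv:2011.03793 — 8 statements merged into one kernel-verified Lean document; each statement's English description precedes it below -/
import Mathlib

section
/- Assume the form [·,·] is indefinite and let x ∈ H with [x, x] ≠ 0. Then the set of real numbers { ‖x‖_J : J is a fundamental symmetry of (H, [·,·]) } is exactly the closed half-line [ |[x, x]|^{1/2}, ∞ ). -/
open scoped ComplexOrder

/-- The indefinite (Krein) inner product `[x, y] := ⟪J₀ x, y⟫` induced by the
continuous linear involution `J₀`. -/
noncomputable def kform {H : Type*} [NormedAddCommGroup H] [InnerProductSpace ℂ H]
    (J₀ : H →L[ℂ] H) (x y : H) : ℂ :=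
  inner ℂ (J₀ x) y

/-- `J` is a fundamental symmetry of the Krein space `(H, [·,·])`:
a continuous linear involution, `[·,·]`-selfadjoint, with `[J x, x] > 0` for `x ≠ 0`. -/
def IsFundamentalSymmetry {H : Type*} [NormedAddCommGroup H] [InnerProductSpace ℂ H]
    (J₀ : H →L[ℂ] H) (J : H →L[ℂ] H) : Prop :=
  (∀ x, J (J x) = x) ∧
  (∀ x y, kform J₀ (J x) y = kform J₀ x (J y)) ∧
  (∀ x, x ≠ 0 → 0 < kform J₀ (J x) x)

/-- The `J`-norm `‖x‖_J := [J x, x] ^ (1/2)`. -/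
noncomputable def jnorm {H : Type*} [NormedAddCommGroup H] [InnerProductSpace ℂ H]
    (J₀ : H →L[ℂ] H) (J : H →L[ℂ] H) (x : H) : ℝ :=
  Real.sqrt (kform J₀ (J x) x).re


section mainhelpers
variable {H : Type*} [NormedAddCommGroup H] [InnerProductSpace ℂ H]

local notation "⟪" a ", " b "⟫" => (inner ℂ a b : ℂ)


lemma key_construct (J₀ : H →L[ℂ] H)
    (hinv : ∀ x, J₀ (J₀ x) = x)
    (hsa : ∀ x y : H, ⟪J₀ x, y⟫ = ⟪x, J₀ y⟫)
    (e f : H) (he : ⟪e, e⟫ = 1) (hf : ⟪f, f⟫ = 1) (hef : ⟪e, f⟫ = 0)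
    (hJe : J₀ e = e) (hJf : J₀ f = -f)
    (c s : ℝ) (h1 : c ^ 2 - s ^ 2 = 1) (h2 : |s| < c) :
    ∃ J : H →L[ℂ] H, IsFundamentalSymmetry J₀ J ∧
      ∀ y : H, kform J₀ (J y) y =
        ⟪y, y⟫ + ((c : ℂ) - 1) * (starRingEnd ℂ ⟪e, y⟫ * ⟪e, y⟫ +
            starRingEnd ℂ ⟪f, y⟫ * ⟪f, y⟫) +
          (s : ℂ) * (starRingEnd ℂ ⟪e, y⟫ * ⟪f, y⟫ + starRingEnd ℂ ⟪f, y⟫ * ⟪e, y⟫) := by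
  have hfe : ⟪f, e⟫ = 0 := by
    rw [← inner_conj_symm, hef, map_zero]
  set u : H := ((c : ℂ) - 1) • e - (s : ℂ) • f with hu
  set v : H := (s : ℂ) • e + (1 - (c : ℂ)) • f with hv
  set J : H →L[ℂ] H := J₀ + ((innerSL ℂ e).smulRight u + (innerSL ℂ f).smulRight v) with hJ
  have happ : ∀ y : H, J y = J₀ y + (⟪e, y⟫ • u + ⟪f, y⟫ • v) := by
    intro y
    simp [hJ]
  have hJ0u : J₀ u = ((c : ℂ) - 1) • e + (s : ℂ) • f := by
    simp [hu, map_sub, map_smul, hJe, hJf, smul_neg, sub_neg_eq_add]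
  have hJ0v : J₀ v = (s : ℂ) • e - (1 - (c : ℂ)) • f := by
    simp [hv, map_add, map_smul, hJe, hJf, smul_neg, sub_eq_add_neg]
  have heu : ⟪e, u⟫ = (c : ℂ) - 1 := by
    simp only [hu, inner_sub_right, inner_smul_right, he, hef]; ring
  have hfu : ⟪f, u⟫ = -(s : ℂ) := by
    simp only [hu, inner_sub_right, inner_smul_right, hf, hfe]; ring
  have hev : ⟪e, v⟫ = (s : ℂ) := by
    simp only [hv, inner_add_right, inner_smul_right, he, hef]; ring
  have hfv : ⟪f, v⟫ = 1 - (c : ℂ) := by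
    simp only [hv, inner_add_right, inner_smul_right, hf, hfe]; ring
  have heJ0 : ∀ y : H, ⟪e, J₀ y⟫ = ⟪e, y⟫ := by
    intro y; rw [← hsa, hJe]
  have hfJ0 : ∀ y : H, ⟪f, J₀ y⟫ = -⟪f, y⟫ := by
    intro y; rw [← hsa, hJf, inner_neg_left]
  have heJ : ∀ y : H, ⟪e, J y⟫ = (c : ℂ) * ⟪e, y⟫ + (s : ℂ) * ⟪f, y⟫ := by
    intro y
    rw [happ]
    simp only [inner_add_right, inner_smul_right, heu, hev, heJ0]
    ring
  have hfJ : ∀ y : H, ⟪f, J y⟫ = -((s : ℂ) * ⟪e, y⟫) - (c : ℂ) * ⟪f, y⟫ := by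
    intro y
    rw [happ]
    simp only [inner_add_right, inner_smul_right, hfu, hfv, hfJ0]
    ring
  have hc : (c : ℂ) ^ 2 - (s : ℂ) ^ 2 = 1 := by
    exact_mod_cast congrArg (Complex.ofReal) h1
  have hinvJ : ∀ y : H, J (J y) = y := by
    intro y
    rw [happ (J y), heJ y, hfJ y, happ y, map_add, map_add, map_smul, map_smul, hinv,
      hJ0u, hJ0v]
    simp only [hu, hv]
    match_scalars
    · ring
    · linear_combination ⟪e, y⟫ * hc
    · linear_combination ⟪f, y⟫ * hc
  have hab : ∀ a b : H, ⟪J₀ a, J₀ b⟫ = ⟪a, b⟫ := fun a b => by rw [hsa, hinv]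
  have hae : ∀ a : H, ⟪J₀ a, e⟫ = starRingEnd ℂ ⟪e, a⟫ := fun a => by
    rw [hsa, hJe, inner_conj_symm]
  have haf : ∀ a : H, ⟪J₀ a, f⟫ = -starRingEnd ℂ ⟪f, a⟫ := fun a => by
    rw [hsa, hJf, inner_neg_right, inner_conj_symm]
  have hform : ∀ y : H, kform J₀ (J y) y =
      ⟪y, y⟫ + ((c : ℂ) - 1) * (starRingEnd ℂ ⟪e, y⟫ * ⟪e, y⟫ +
          starRingEnd ℂ ⟪f, y⟫ * ⟪f, y⟫) +
        (s : ℂ) * (starRingEnd ℂ ⟪e, y⟫ * ⟪f, y⟫ + starRingEnd ℂ ⟪f, y⟫ * ⟪e, y⟫) := by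
    intro y
    rw [kform, happ y, map_add, map_add, map_smul, map_smul, hinv y, hJ0u, hJ0v]
    simp only [inner_add_left, inner_smul_left, inner_sub_left, map_sub, map_one,
      map_add, Complex.conj_ofReal]
    ring
  have hsym : ∀ a b : H, kform J₀ (J a) b = kform J₀ a (J b) := by
    intro a b
    rw [kform, kform, happ a, happ b, map_add, map_add, map_smul, map_smul, hinv a,
      hJ0u, hJ0v, hu, hv]
    simp only [inner_add_left, inner_add_right, inner_smul_left, inner_smul_right,
      inner_sub_left, inner_sub_right, map_sub, map_one, map_add, Complex.conj_ofReal,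
      hab, hae, haf]
    ring
  have hself : ∀ w : H, (inner ℂ w w : ℂ) = ((‖w‖ ^ 2 : ℝ) : ℂ) := fun w => by
    rw [inner_self_eq_norm_sq_to_K]; norm_cast
  have hpos : ∀ y : H, y ≠ 0 → 0 < kform J₀ (J y) y := by
    intro y hy
    set p : ℂ := ⟪e, y⟫ with hp
    set q : ℂ := ⟪f, y⟫ with hq
    -- Bessel
    have hw : ⟪y - p • e - q • f, y - p • e - q • f⟫ =
        ((‖y‖ ^ 2 - (Complex.normSq p + Complex.normSq q) : ℝ) : ℂ) := by
      have hye : ⟪y, e⟫ = starRingEnd ℂ p := by rw [hp, inner_conj_symm]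
      have hyf : ⟪y, f⟫ = starRingEnd ℂ q := by rw [hq, inner_conj_symm]
      simp only [inner_sub_left, inner_sub_right, inner_smul_left, inner_smul_right,
        he, hf, hef, hfe, hye, hyf, hself y, ← hp, ← hq]
      push_cast [Complex.normSq_eq_conj_mul_self]
      ring
    have hbessel : Complex.normSq p + Complex.normSq q ≤ ‖y‖ ^ 2 := by
      have := hw.symm.trans (hself (y - p • e - q • f))
      have h2 := Complex.ofReal_injective this
      nlinarith [sq_nonneg ‖y - p • e - q • f‖]
    have hval : kform J₀ (J y) y = ((‖y‖ ^ 2 + (c - 1) * (Complex.normSq p + Complex.normSq q)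
        + s * (2 * (starRingEnd ℂ p * q).re) : ℝ) : ℂ) := by
      rw [hform y, ← hp, ← hq, hself y]
      have e3 : starRingEnd ℂ p * q + starRingEnd ℂ q * p =
          ((2 * (starRingEnd ℂ p * q).re : ℝ) : ℂ) := by
        rw [← Complex.add_conj]
        simp only [map_mul, Complex.conj_conj]
        ring
      rw [e3]
      push_cast [Complex.normSq_eq_conj_mul_self]
      ring
    rw [hval, Complex.zero_lt_real]
    have hyn : 0 < ‖y‖ := norm_pos_iff.2 hy
    have habs : |(starRingEnd ℂ p * q).re| ≤ ‖p‖ * ‖q‖ := by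
      calc |(starRingEnd ℂ p * q).re| ≤ ‖starRingEnd ℂ p * q‖ :=
            Complex.abs_re_le_norm _
        _ = ‖p‖ * ‖q‖ := by
            rw [norm_mul, Complex.norm_conj]
    have hs1 : s ≤ |s| := le_abs_self s
    have hs2 : -|s| ≤ s := neg_abs_le s
    have hT1 : -(|s| * (‖p‖ * ‖q‖)) ≤ s * (starRingEnd ℂ p * q).re := by
      rw [neg_le]
      calc -(s * (starRingEnd ℂ p * q).re) ≤ |(-(s * (starRingEnd ℂ p * q).re))| :=
            le_abs_self _
        _ = |s| * |(starRingEnd ℂ p * q).re| := by rw [abs_neg, abs_mul]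
        _ ≤ |s| * (‖p‖ * ‖q‖) := by
            exact mul_le_mul_of_nonneg_left habs (abs_nonneg s)
    have hnp : Complex.normSq p = ‖p‖ ^ 2 := (Complex.sq_norm p).symm
    have hnq : Complex.normSq q = ‖q‖ ^ 2 := (Complex.sq_norm q).symm
    rcases eq_or_lt_of_le (add_nonneg (Complex.normSq_nonneg p) (Complex.normSq_nonneg q)) with
      hN | hN
    · -- normSq p + normSq q = 0
      have hp0 : Complex.normSq p = 0 := by
        linarith [Complex.normSq_nonneg p, Complex.normSq_nonneg q]
      have hq0 : Complex.normSq q = 0 := by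
        linarith [Complex.normSq_nonneg p, Complex.normSq_nonneg q]
      have hT0 : (starRingEnd ℂ p * q).re = 0 := by
        rw [Complex.normSq_eq_zero.1 hq0]; simp
      simp only [hp0, hq0, hT0, add_zero, mul_zero, zero_add]
      exact pow_pos hyn 2
    · nlinarith [sq_nonneg (‖p‖ - ‖q‖), abs_nonneg s,
        mul_pos (sub_pos.2 h2) hN,
        mul_nonneg (abs_nonneg s) (sq_nonneg (‖p‖ - ‖q‖))]
  exact ⟨J, ⟨hinvJ, hsym, hpos⟩, hform⟩

lemma inner_self_real (w : H) : (inner ℂ w w : ℂ) = ((‖w‖ ^ 2 : ℝ) : ℂ) := by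
  rw [inner_self_eq_norm_sq_to_K]; norm_cast

lemma ortho_pm (J₀ : H →L[ℂ] H)
    (hsa : ∀ x y : H, ⟪J₀ x, y⟫ = ⟪x, J₀ y⟫)
    {a b : H} (ha : J₀ a = a) (hb : J₀ b = -b) : ⟪a, b⟫ = 0 := by
  have h := hsa a b
  rw [ha, hb, inner_neg_right] at h
  linear_combination h / 2

end mainhelpers

local notation "⟪" a ", " b "⟫" => (inner ℂ a b : ℂ)

set_option maxHeartbeats 1000000 in
theorem range_jnorm_of_form_ne_zero
    {H : Type*} [NormedAddCommGroup H] [InnerProductSpace ℂ H] [CompleteSpace H]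
    (J₀ : H →L[ℂ] H)
    (hinv : ∀ x, J₀ (J₀ x) = x)
    (hsa : ∀ x y : H, (inner ℂ (J₀ x) y : ℂ) = inner ℂ x (J₀ y))
    (hindef : ∃ u v : H, 0 < kform J₀ u u ∧ kform J₀ v v < 0)
    (x : H) (hx : kform J₀ x x ≠ 0) :
    {r : ℝ | ∃ J : H →L[ℂ] H, IsFundamentalSymmetry J₀ J ∧ jnorm J₀ J x = r} =
      Set.Ici (Real.sqrt ‖kform J₀ x x‖) := by
  have hx0 : x ≠ 0 := by
    intro h; apply hx; simp [kform, h]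
  -- the form [x,x] is real
  have hxxreal : kform J₀ x x = (((kform J₀ x x).re : ℝ) : ℂ) := by
    have h1 : starRingEnd ℂ (kform J₀ x x) = kform J₀ x x := by
      rw [kform, inner_conj_symm, hsa]
    have h2 := Complex.conj_eq_iff_im.1 h1
    exact (Complex.re_add_im (kform J₀ x x)).symm.trans (by rw [h2]; simp)
  set t : ℝ := (kform J₀ x x).re with ht
  have habs : ‖kform J₀ x x‖ = |t| := by
    rw [hxxreal, Complex.norm_real, Real.norm_eq_abs]
  ext r
  simp only [Set.mem_setOf_eq, Set.mem_Ici]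
  constructor
  · rintro ⟨J, ⟨hJ1, hJ2, hJ3⟩, hr⟩
    have hNpos := hJ3 x hx0
    rw [Complex.lt_def] at hNpos
    obtain ⟨hnre, hnim⟩ := hNpos
    simp only [Complex.zero_re, Complex.zero_im] at hnre hnim
    set n : ℝ := (kform J₀ (J x) x).re with hn
    have hNc : kform J₀ (J x) x = ((n : ℝ) : ℂ) := by
      exact (Complex.re_add_im (kform J₀ (J x) x)).symm.trans (by rw [← hnim]; simp; rfl)
    -- key inner products
    have k1 : ⟪J₀ x, J x⟫ = ((n : ℝ) : ℂ) := by
      rw [← hNc]; exact (hJ2 x x).symm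
    have k2 : ⟪J₀ x, x⟫ = ((t : ℝ) : ℂ) := hxxreal
    have k3 : ⟪J₀ (J x), J x⟫ = ((t : ℝ) : ℂ) := by
      have h := hJ2 x (J x)
      rw [hJ1] at h
      exact h.trans hxxreal
    have k4 : ⟪J₀ (J x), x⟫ = ((n : ℝ) : ℂ) := hNc
    -- positivity of the form at w
    set w : H := ((n : ℝ) : ℂ) • J x - ((t : ℝ) : ℂ) • x with hw
    have hwv : kform J₀ (J w) w = ((n ^ 3 - n * t ^ 2 : ℝ) : ℂ) := by
      have hJw : J w = ((n : ℝ) : ℂ) • x - ((t : ℝ) : ℂ) • J x := by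
        rw [hw, map_sub, map_smul, map_smul, hJ1]
      rw [kform, hJw, hw, map_sub, map_smul, map_smul]
      simp only [inner_sub_left, inner_sub_right, inner_smul_left, inner_smul_right,
        k1, k2, k3, k4, Complex.conj_ofReal]
      push_cast
      ring
    have hge : (0 : ℝ) ≤ n ^ 3 - n * t ^ 2 := by
      rcases eq_or_ne w 0 with h0 | h0
      · have hz : kform J₀ (J w) w = 0 := by simp [kform, h0]
        have h0' : ((n ^ 3 - n * t ^ 2 : ℝ) : ℂ) = 0 := by rw [← hwv, hz]
        have := Complex.ofReal_eq_zero.1 h0'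
        linarith
      · have h1 := le_of_lt (hJ3 w h0)
        rw [hwv] at h1
        exact_mod_cast h1
    have htn : |t| ≤ n := by
      by_contra hcon
      push_neg at hcon
      have h2 : n ^ 2 < t ^ 2 := by nlinarith [sq_abs t, abs_nonneg t]
      nlinarith [mul_lt_mul_of_pos_left h2 hnre]
    rw [← hr, habs, jnorm, ← hn]
    exact Real.sqrt_le_sqrt htn
  · intro hr
    clear ht habs
    obtain ⟨u, v, hu, hv⟩ := hindef
    have hnormalize : ∀ w : H, w ≠ 0 →
        ⟪(((‖w‖⁻¹ : ℝ) : ℂ) • w), (((‖w‖⁻¹ : ℝ) : ℂ) • w)⟫ = 1 := by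
      intro w hw
      rw [inner_smul_left, inner_smul_right, inner_self_real, Complex.conj_ofReal]
      have hne : ‖w‖ ≠ 0 := norm_ne_zero_iff.2 hw
      push_cast
      field_simp
    set xp : H := (2 : ℂ)⁻¹ • (x + J₀ x) with hxpd
    set xm : H := (2 : ℂ)⁻¹ • (x - J₀ x) with hxmd
    have hxpJ : J₀ xp = xp := by
      rw [hxpd, map_smul, map_add, hinv, add_comm]
    have hxmJ : J₀ xm = -xm := by
      rw [hxmd, map_smul, map_sub, hinv, ← smul_neg, neg_sub]
    have hsum : xp + xm = x := by
      rw [hxpd, hxmd, ← smul_add]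
      have : x + J₀ x + (x - J₀ x) = (2 : ℂ) • x := by
        rw [two_smul]; abel
      rw [this, smul_smul]
      norm_num
    set α : ℝ := ‖xp‖ with hαd
    set β : ℝ := ‖xm‖ with hβd
    -- existence of a normalized positive eigenvector pairing correctly with x
    have hE : ∃ e : H, J₀ e = e ∧ ⟪e, e⟫ = 1 ∧ ⟪e, x⟫ = ((α : ℝ) : ℂ) := by
      by_cases hxp0 : xp = 0
      · set up : H := (2 : ℂ)⁻¹ • (u + J₀ u) with hupd
        have hupJ : J₀ up = up := by
          rw [hupd, map_smul, map_add, hinv, add_comm]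
        have hup0 : up ≠ 0 := by
          intro h
          have hz : u + J₀ u = 0 := by
            have h2 := congrArg (fun z : H => (2 : ℂ) • z) h
            simpa [hupd, smul_smul] using h2
          have hJu : J₀ u = -u := by
            have := eq_neg_of_add_eq_zero_right hz
            exact this
          have hval : kform J₀ u u = -((‖u‖ ^ 2 : ℝ) : ℂ) := by
            rw [kform, hJu, inner_neg_left, inner_self_real]
          rw [hval, Complex.lt_def] at hu
          obtain ⟨h1, _⟩ := hu
          simp only [Complex.zero_re, Complex.neg_re, Complex.ofReal_re] at h1
          nlinarith [sq_nonneg ‖u‖]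
        refine ⟨((‖up‖⁻¹ : ℝ) : ℂ) • up, ?_, hnormalize up hup0, ?_⟩
        · rw [map_smul, hupJ]
        · have ha0 : α = 0 := by rw [hαd, hxp0, norm_zero]
          have hxeq : x = xm := by rw [← hsum, hxp0, zero_add]
          rw [ha0, hxeq, inner_smul_left, ortho_pm J₀ hsa hupJ hxmJ]
          simp
      · refine ⟨((‖xp‖⁻¹ : ℝ) : ℂ) • xp, ?_, hnormalize xp hxp0, ?_⟩
        · rw [map_smul, hxpJ]
        · have hxne : α ≠ 0 := by rw [hαd]; exact norm_ne_zero_iff.2 hxp0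
          have h' : ⟪xp, x⟫ = ((α ^ 2 : ℝ) : ℂ) := by
            conv_lhs => rw [← hsum]
            rw [inner_add_right, ortho_pm J₀ hsa hxpJ hxmJ, inner_self_real, add_zero, ← hαd]
          rw [inner_smul_left, h', Complex.conj_ofReal]
          push_cast
          field_simp
          ring
    have hF : ∃ f : H, J₀ f = -f ∧ ⟪f, f⟫ = 1 ∧ ⟪f, x⟫ = ((β : ℝ) : ℂ) := by
      by_cases hxm0 : xm = 0
      · set vm : H := (2 : ℂ)⁻¹ • (v - J₀ v) with hvmd
        have hvmJ : J₀ vm = -vm := by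
          rw [hvmd, map_smul, map_sub, hinv, ← smul_neg, neg_sub]
        have hvm0 : vm ≠ 0 := by
          intro h
          have hz : v - J₀ v = 0 := by
            have h2 := congrArg (fun z : H => (2 : ℂ) • z) h
            simpa [hvmd, smul_smul] using h2
          have hJv : J₀ v = v := (sub_eq_zero.1 hz).symm
          have hval : kform J₀ v v = ((‖v‖ ^ 2 : ℝ) : ℂ) := by
            rw [kform, hJv, inner_self_real]
          rw [hval, Complex.lt_def] at hv
          obtain ⟨h1, _⟩ := hv
          simp only [Complex.zero_re, Complex.ofReal_re] at h1
          nlinarith [sq_nonneg ‖v‖]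
        refine ⟨((‖vm‖⁻¹ : ℝ) : ℂ) • vm, ?_, hnormalize vm hvm0, ?_⟩
        · rw [map_smul, hvmJ, smul_neg]
        · have hb0 : β = 0 := by rw [hβd, hxm0, norm_zero]
          have hxeq : x = xp := by rw [← hsum, hxm0, add_zero]
          have hpv : ⟪vm, xp⟫ = 0 := by
            rw [← inner_conj_symm, ortho_pm J₀ hsa hxpJ hvmJ, map_zero]
          rw [hb0, hxeq, inner_smul_left, hpv]
          simp
      · refine ⟨((‖xm‖⁻¹ : ℝ) : ℂ) • xm, ?_, hnormalize xm hxm0, ?_⟩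
        · rw [map_smul, hxmJ, smul_neg]
        · have hxne : β ≠ 0 := by rw [hβd]; exact norm_ne_zero_iff.2 hxm0
          have hmp : ⟪xm, xp⟫ = 0 := by
            rw [← inner_conj_symm, ortho_pm J₀ hsa hxpJ hxmJ, map_zero]
          have h' : ⟪xm, x⟫ = ((β ^ 2 : ℝ) : ℂ) := by
            conv_lhs => rw [← hsum]
            rw [inner_add_right, hmp, inner_self_real, zero_add, ← hβd]
          rw [inner_smul_left, h', Complex.conj_ofReal]
          push_cast
          field_simp
          ring
    obtain ⟨e, hJe, hee, hex⟩ := hE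
    obtain ⟨f, hJf, hff, hfx⟩ := hF
    have hef : ⟪e, f⟫ = 0 := ortho_pm J₀ hsa hJe hJf
    -- values of the form
    have hmp : ⟪xm, xp⟫ = 0 := by
      rw [← inner_conj_symm, ortho_pm J₀ hsa hxpJ hxmJ, map_zero]
    have hpm : ⟪xp, xm⟫ = 0 := ortho_pm J₀ hsa hxpJ hxmJ
    have hJx : J₀ x = xp - xm := by
      rw [← hsum, map_add, hxpJ, hxmJ, ← sub_eq_add_neg]
    have hxval : kform J₀ x x = ((α ^ 2 - β ^ 2 : ℝ) : ℂ) := by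
      have h1 : kform J₀ x x = ⟪xp - xm, xp + xm⟫ := by rw [kform, hJx, hsum]
      rw [h1, inner_sub_left, inner_add_right, inner_add_right, hpm, hmp,
        inner_self_real xp, inner_self_real xm, ← hαd, ← hβd]
      push_cast
      ring
    have hnx : ‖x‖ ^ 2 = α ^ 2 + β ^ 2 := by
      have h1 : ((‖x‖ ^ 2 : ℝ) : ℂ) = ((α ^ 2 + β ^ 2 : ℝ) : ℂ) := by
        rw [← inner_self_real x, ← hsum, inner_add_left, inner_add_right,
          inner_add_right, hpm, hmp, inner_self_real xp, inner_self_real xm, ← hαd, ← hβd]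
        push_cast
        ring
      exact_mod_cast h1
    -- numerics
    have hα0 : 0 ≤ α := by rw [hαd]; exact norm_nonneg _
    have hβ0 : 0 ≤ β := by rw [hβd]; exact norm_nonneg _
    clear_value α β
    clear hαd hβd hmp hpm hJx hxpJ hxmJ hsum hnormalize hu hv
    clear_value xp xm
    clear hxpd hxmd xp xm
    have hTne : α ^ 2 - β ^ 2 ≠ 0 := by
      intro h
      apply hx
      rw [hxval, h]
      norm_num
    have habs2 : ‖kform J₀ x x‖ = |α ^ 2 - β ^ 2| := by
      rw [hxval, Complex.norm_real, Real.norm_eq_abs]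
    rw [habs2] at hr
    have hr0 : 0 ≤ r := le_trans (Real.sqrt_nonneg _) hr
    have hRT : |α ^ 2 - β ^ 2| ≤ r ^ 2 := by
      nlinarith [Real.sq_sqrt (abs_nonneg (α ^ 2 - β ^ 2)),
        Real.sqrt_nonneg |α ^ 2 - β ^ 2|]
    have hTpos : 0 < |α ^ 2 - β ^ 2| := abs_pos.2 hTne
    have hA : 0 < α ^ 2 + β ^ 2 := by
      rw [← hnx]
      exact pow_pos (norm_pos_iff.2 hx0) 2
    have hAB : 0 < α ^ 2 + β ^ 2 + 2 * α * β := by nlinarith [mul_nonneg hα0 hβ0]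
    obtain ⟨D, hD0, hD2⟩ : ∃ D : ℝ, 0 ≤ D ∧ D ^ 2 = r ^ 4 - (α ^ 2 - β ^ 2) ^ 2 :=
      ⟨Real.sqrt (r ^ 4 - (α ^ 2 - β ^ 2) ^ 2), Real.sqrt_nonneg _,
        Real.sq_sqrt (by nlinarith [sq_abs (α ^ 2 - β ^ 2), abs_nonneg (α ^ 2 - β ^ 2)])⟩
    set u0 : ℝ := (r ^ 2 + D) / (α ^ 2 + β ^ 2 + 2 * α * β) with hu0d
    have hu0 : 0 < u0 := by
      apply div_pos _ hAB
      nlinarith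
    have hune : u0 ≠ 0 := ne_of_gt hu0
    have hkey1 : (α ^ 2 + β ^ 2 + 2 * α * β) * u0 = r ^ 2 + D := by
      rw [hu0d]
      field_simp
    clear hu0d
    clear_value u0
    set c : ℝ := (u0 ^ 2 + 1) / (2 * u0) with hcd
    set s : ℝ := (u0 ^ 2 - 1) / (2 * u0) with hsd
    have h1 : c ^ 2 - s ^ 2 = 1 := by
      rw [hcd, hsd]
      field_simp [hune]
      ring
    have h2 : |s| < c := by
      have hd1 : c - s = 1 / u0 := by rw [hcd, hsd]; field_simp [hune]; ring
      have hd2 : c + s = u0 := by rw [hcd, hsd]; field_simp [hune]; ring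
      have hp1 : 0 < 1 / u0 := by positivity
      rw [abs_lt]
      constructor <;> linarith
    have hkey4 : (r ^ 2 - D) * (r ^ 2 + D) =
        ((α ^ 2 + β ^ 2) - 2 * α * β) * (α ^ 2 + β ^ 2 + 2 * α * β) := by
      nlinarith [hD2]
    have hkey2 : (r ^ 2 - D) * u0 = (α ^ 2 + β ^ 2) - 2 * α * β := by
      apply mul_right_cancel₀ (ne_of_gt hAB)
      linear_combination (r ^ 2 - D) * hkey1 + hkey4
    have hvalue : (α ^ 2 + β ^ 2) * c + (2 * α * β) * s = r ^ 2 := by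
      rw [hcd, hsd]
      field_simp [hune]
      linear_combination u0 * hkey1 - hkey2
    obtain ⟨J, hFS, hform⟩ := key_construct J₀ hinv hsa e f hee hff hef hJe hJf c s h1 h2
    refine ⟨J, hFS, ?_⟩
    have hfxv : kform J₀ (J x) x = ((r ^ 2 : ℝ) : ℂ) := by
      have hstep : kform J₀ (J x) x =
          (((α ^ 2 + β ^ 2) * c + (2 * α * β) * s : ℝ) : ℂ) := by
        rw [hform x, hex, hfx, inner_self_real x, hnx]
        push_cast [Complex.conj_ofReal]
        ring
      rw [hstep, hvalue]
    rw [jnorm, hfxv, Complex.ofReal_re]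
    exact Real.sqrt_sq hr0
end

section
/- Assume the form [·,·] is indefinite, let x ∈ H with [x, x] ≠ 0, and let J be a fundamental symmetry of (H, [·,·]). Then ‖x‖_J = |[x, x]|^{1/2} if and only if J x = x or J x = −x (i.e., x lies in the positive or the negative component of the fundamental decomposition associated with J). -/
open scoped ComplexOrder

theorem jnorm_eq_sqrt_abs_form_iff
    {H : Type*} [NormedAddCommGroup H] [InnerProductSpace ℂ H] [CompleteSpace H]
    (J₀ : H →L[ℂ] H)
    (hinv : ∀ x, J₀ (J₀ x) = x)
    (hsa : ∀ x y : H, (inner ℂ (J₀ x) y : ℂ) = inner ℂ x (J₀ y))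
    (hindef : ∃ u v : H, 0 < kform J₀ u u ∧ kform J₀ v v < 0)
    (x : H) (hx : kform J₀ x x ≠ 0)
    (J : H →L[ℂ] H) (hJ : IsFundamentalSymmetry J₀ J) :
    jnorm J₀ J x = Real.sqrt ‖kform J₀ x x‖ ↔ J x = x ∨ J x = -x := by
  obtain ⟨hJJ, hJsa, hJpos⟩ := hJ
  -- reality of diagonal values
  have hreal : ∀ z : H, (kform J₀ z z).im = 0 := by
    intro z
    have h1 : (starRingEnd ℂ) (kform J₀ z z) = kform J₀ z z := by
      rw [kform, hsa, inner_conj_symm]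
      exact hsa z z
    rw [Complex.conj_eq_iff_im] at h1
    exact h1
  have hxne : x ≠ 0 := by
    intro h; apply hx; simp [kform, h]
  -- positivity facts
  have hpos : ∀ z : H, z ≠ 0 → 0 < (kform J₀ (J z) z).re ∧ (kform J₀ (J z) z).im = 0 := by
    intro z hz
    have := hJpos z hz
    rw [Complex.lt_def] at this
    exact ⟨by simpa using this.1, by simpa using this.2.symm⟩
  set c := kform J₀ (J x) x with hc
  set d := kform J₀ x x with hd
  have hcpos : 0 < c.re := (hpos x hxne).1
  have hcim : c.im = 0 := (hpos x hxne).2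
  have hdim : d.im = 0 := hreal x
  have hdre : d.re ≠ 0 := by
    intro h; apply hx; exact Complex.ext h hdim
  -- the ± components
  set u := x + J x with hu
  set v := x - J x with hv
  have hJu : J u = u := by
    simp only [hu, map_add, hJJ]; abel
  have hJv : J v = -v := by
    simp only [hv, map_sub, hJJ]; abel
  -- symmetry of the form on (x, Jx)
  have hsym : kform J₀ x (J x) = c := (hJsa x x).symm
  have hJxJx : kform J₀ (J x) (J x) = d := by
    rw [hJsa, hJJ]
  have hAd : kform J₀ u u = 2 * (d + c) := by
    simp only [hu, kform, map_add, inner_add_left, inner_add_right]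
    have e1 : (inner ℂ (J₀ x) (J x) : ℂ) = c := hsym
    have e2 : (inner ℂ (J₀ (J x)) x : ℂ) = c := rfl
    have e3 : (inner ℂ (J₀ (J x)) (J x) : ℂ) = d := hJxJx
    have e4 : (inner ℂ (J₀ x) x : ℂ) = d := rfl
    rw [e1, e2, e3, e4]; ring
  have hBd : kform J₀ v v = 2 * (d - c) := by
    simp only [hv, kform, map_sub, inner_sub_left, inner_sub_right]
    have e1 : (inner ℂ (J₀ x) (J x) : ℂ) = c := hsym
    have e2 : (inner ℂ (J₀ (J x)) x : ℂ) = c := rfl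
    have e3 : (inner ℂ (J₀ (J x)) (J x) : ℂ) = d := hJxJx
    have e4 : (inner ℂ (J₀ x) x : ℂ) = d := rfl
    rw [e1, e2, e3, e4]; ring
  have hAre : (kform J₀ u u).re = 2 * (d.re + c.re) := by
    rw [hAd]; simp
  have hBre : (kform J₀ v v).re = 2 * (d.re - c.re) := by
    rw [hBd]; simp
  -- sign facts
  have hAnonneg : 0 ≤ d.re + c.re := by
    by_cases h : u = 0
    · have : kform J₀ u u = 0 := by simp [kform, h]
      have := congrArg Complex.re this
      rw [hAre] at this; simp at this; linarith
    · have := (hpos u h).1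
      rw [hJu] at this; rw [hAre] at this; linarith
  have hBnonpos : d.re - c.re ≤ 0 := by
    by_cases h : v = 0
    · have : kform J₀ v v = 0 := by simp [kform, h]
      have := congrArg Complex.re this
      rw [hBre] at this; simp at this; linarith
    · have h2 := (hpos v h).1
      rw [hJv] at h2
      have : kform J₀ (-v) v = -(kform J₀ v v) := by
        simp [kform, inner_neg_left]
      rw [this] at h2
      simp only [Complex.neg_re] at h2
      rw [hBre] at h2; linarith
  -- |d| = |d.re|
  have habs : ‖d‖ = |d.re| := by
    have : d = (d.re : ℂ) := Complex.ext rfl (by simpa using hdim)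
    rw [this, Complex.norm_real]; simp
  constructor
  · intro heq
    unfold jnorm at heq
    rw [habs] at heq
    have hceq : c.re = |d.re| := by
      have h1 : 0 ≤ c.re := le_of_lt hcpos
      have h2 : 0 ≤ |d.re| := abs_nonneg _
      exact (Real.sqrt_inj h1 h2).mp heq
    rcases le_or_gt 0 d.re with hdp | hdn
    · -- d.re ≥ 0 : c.re = d.re, so v-component vanishes
      left
      rw [abs_of_nonneg hdp] at hceq
      by_contra hne
      have hvne : v ≠ 0 := by
        intro h; apply hne
        exact (sub_eq_zero.mp (show x - J x = 0 from h)).symm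
      have h2 := (hpos v hvne).1
      rw [hJv] at h2
      have h3 : kform J₀ (-v) v = -(kform J₀ v v) := by
        simp [kform, inner_neg_left]
      rw [h3] at h2
      simp only [Complex.neg_re] at h2
      rw [hBre] at h2
      linarith
    · -- d.re < 0 : c.re = -d.re, so u-component vanishes
      right
      rw [abs_of_neg hdn] at hceq
      by_contra hne
      have hune : u ≠ 0 := by
        intro h; apply hne
        exact eq_neg_of_add_eq_zero_right (show x + J x = 0 from h)
      have h2 := (hpos u hune).1
      rw [hJu, hAre] at h2
      linarith
  · intro h
    unfold jnorm
    rw [← hc, habs]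
    rcases h with h | h
    · have : c = d := by rw [hc, h]
      rw [this, abs_of_nonneg (by rw [← this]; exact le_of_lt hcpos)]
    · have : c = -d := by
        rw [hc, h, hd]; simp only [map_neg, kform, inner_neg_left]
      have hcre : c.re = -d.re := by rw [this]; simp
      rw [hcre, abs_of_neg (by linarith)]
end

section
/- Assume the form [·,·] is indefinite and let x ∈ H with x ≠ 0 and [x, x] = 0. Then the set of real numbers { ‖x‖_J : J is a fundamental symmetry of (H, [·,·]) } is exactly the open half-line (0, ∞). -/
open scoped ComplexOrder

section aux

set_option linter.unusedSectionVars false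

variable {H : Type*} [NormedAddCommGroup H] [InnerProductSpace ℂ H]

local notation "⟪" x ", " y "⟫" => @inner ℂ _ _ x y

/-- The deformed fundamental symmetry acting on `span{e,f}` by the matrix
`[[p, q], [-q, -p]]` and as `J₀` elsewhere. -/
noncomputable def myJ (J₀ : H →L[ℂ] H) (e f : H) (p q : ℝ) : H →L[ℂ] H :=
  J₀ + ((p : ℂ) - 1) • ((innerSL ℂ e).smulRight e) + (q : ℂ) • ((innerSL ℂ f).smulRight e)
    - (q : ℂ) • ((innerSL ℂ e).smulRight f) + ((1 : ℂ) - (p : ℂ)) • ((innerSL ℂ f).smulRight f)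

lemma myJ_apply (J₀ : H →L[ℂ] H) (e f : H) (p q : ℝ) (y : H) :
    myJ J₀ e f p q y = J₀ y + (((p : ℂ) - 1) * ⟪e, y⟫ + (q : ℂ) * ⟪f, y⟫) • e
      + (-(q : ℂ) * ⟪e, y⟫ + ((1 : ℂ) - (p : ℂ)) * ⟪f, y⟫) • f := by
  simp only [myJ, ContinuousLinearMap.add_apply, ContinuousLinearMap.sub_apply,
    ContinuousLinearMap.smul_apply, ContinuousLinearMap.smulRight_apply, innerSL_apply_apply]
  module

variable (J₀ : H →L[ℂ] H) (e f : H) (p q : ℝ)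
variable (hinv : ∀ x, J₀ (J₀ x) = x)
variable (hsa : ∀ x y : H, (inner ℂ (J₀ x) y : ℂ) = inner ℂ x (J₀ y))
variable (he : ⟪e, e⟫ = 1) (hf : ⟪f, f⟫ = 1) (hef : ⟪e, f⟫ = 0)
variable (hJe : J₀ e = e) (hJf : J₀ f = -f)

include hsa he hJe in
lemma inner_e_J₀ (y : H) : ⟪e, J₀ y⟫ = ⟪e, y⟫ := by
  rw [← hsa, hJe]

include hsa hf hJf in
lemma inner_f_J₀ (y : H) : ⟪f, J₀ y⟫ = -⟪f, y⟫ := by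
  rw [← hsa, hJf, inner_neg_left]

include hinv hsa he hf hef hJe hJf in
lemma myJ_invol (hpq : p ^ 2 - q ^ 2 = 1) (y : H) :
    myJ J₀ e f p q (myJ J₀ e f p q y) = y := by
  have hfe : ⟪f, e⟫ = 0 := by
    rw [← inner_conj_symm, hef, map_zero]
  have h1 : ⟪e, myJ J₀ e f p q y⟫ = (p : ℂ) * ⟪e, y⟫ + (q : ℂ) * ⟪f, y⟫ := by
    rw [myJ_apply]
    rw [inner_add_right, inner_add_right, inner_smul_right, inner_smul_right,
      inner_e_J₀ J₀ e hsa he hJe, he, hef]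
    ring
  have h2 : ⟪f, myJ J₀ e f p q y⟫ = -(q : ℂ) * ⟪e, y⟫ - (p : ℂ) * ⟪f, y⟫ := by
    rw [myJ_apply]
    rw [inner_add_right, inner_add_right, inner_smul_right, inner_smul_right,
      inner_f_J₀ J₀ f hsa hf hJf, hf, hfe]
    ring
  have hpqc : (p : ℂ) ^ 2 - (q : ℂ) ^ 2 = 1 := by exact_mod_cast congrArg (Complex.ofReal) hpq
  rw [myJ_apply J₀ e f p q (myJ J₀ e f p q y), h1, h2, myJ_apply J₀ e f p q y,
    map_add, map_add, map_smul, map_smul, hinv, hJe, hJf]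
  match_scalars
  · ring
  · linear_combination (inner ℂ e y : ℂ) * hpqc
  · linear_combination (inner ℂ f y : ℂ) * hpqc

include hinv hsa hJe hJf in
lemma myJ_symm (x y : H) :
    kform J₀ (myJ J₀ e f p q x) y = kform J₀ x (myJ J₀ e f p q y) := by
  simp only [kform, myJ_apply, map_add, map_smul, hinv, hJe, hJf, hsa, smul_neg,
    inner_add_left, inner_add_right, inner_smul_left, inner_smul_right, inner_neg_left,
    inner_neg_right, map_add, map_mul, map_sub, map_neg, map_one, Complex.conj_ofReal,
    inner_conj_symm]
  ring

include hinv hJe hJf in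
lemma myJ_kform (y : H) :
    kform J₀ (myJ J₀ e f p q y) y =
      ((‖y‖ ^ 2 + (p - 1) * (‖(⟪e, y⟫ : ℂ)‖ ^ 2 + ‖(⟪f, y⟫ : ℂ)‖ ^ 2)
        + q * (2 * ((starRingEnd ℂ) (⟪f, y⟫ : ℂ) * (⟪e, y⟫ : ℂ)).re) : ℝ) : ℂ) := by
  have e1 : (starRingEnd ℂ) (⟪e, y⟫ : ℂ) * ⟪e, y⟫ = ((‖(⟪e, y⟫ : ℂ)‖ : ℂ)) ^ 2 := by
    rw [RCLike.conj_mul]; norm_cast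
  have e2 : (starRingEnd ℂ) (⟪f, y⟫ : ℂ) * ⟪f, y⟫ = ((‖(⟪f, y⟫ : ℂ)‖ : ℂ)) ^ 2 := by
    rw [RCLike.conj_mul]; norm_cast
  have hyy : (⟪y, y⟫ : ℂ) = ((‖y‖ : ℂ)) ^ 2 := by
    rw [inner_self_eq_norm_sq_to_K]; norm_cast
  have e3 : (starRingEnd ℂ) (⟪f, y⟫ : ℂ) * ⟪e, y⟫ + (starRingEnd ℂ) (⟪e, y⟫ : ℂ) * ⟪f, y⟫
      = 2 * ((((starRingEnd ℂ) (⟪f, y⟫ : ℂ) * (⟪e, y⟫ : ℂ)).re : ℝ) : ℂ) := by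
    have h := Complex.add_conj ((starRingEnd ℂ) (⟪f, y⟫ : ℂ) * (⟪e, y⟫ : ℂ))
    rw [map_mul, Complex.conj_conj] at h
    rw [show ((starRingEnd ℂ) (⟪f, y⟫ : ℂ) * ⟪e, y⟫ + (starRingEnd ℂ) (⟪e, y⟫ : ℂ) * ⟪f, y⟫ : ℂ)
      = (starRingEnd ℂ) (⟪f, y⟫ : ℂ) * ⟪e, y⟫ + ⟪f, y⟫ * (starRingEnd ℂ) (⟪e, y⟫ : ℂ) by ring, h]
    push_cast
    ring
  rw [kform, myJ_apply, map_add, map_add, map_smul, map_smul, hinv, hJe, hJf]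
  rw [inner_add_left, inner_add_left, inner_smul_left, inner_smul_left, inner_neg_left, hyy]
  simp only [map_add, map_mul, map_sub, map_neg, map_one, Complex.conj_ofReal]
  push_cast
  linear_combination ((p : ℂ) - 1) * e1 + ((p : ℂ) - 1) * e2 + (q : ℂ) * e3

include he hf hef in
lemma bessel_two (y : H) : ‖(⟪e, y⟫ : ℂ)‖ ^ 2 + ‖(⟪f, y⟫ : ℂ)‖ ^ 2 ≤ ‖y‖ ^ 2 := by
  have hfe : ⟪f, e⟫ = 0 := by
    rw [← inner_conj_symm, hef, map_zero]
  have ho : Orthonormal ℂ ![e, f] := by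
    rw [orthonormal_iff_ite]
    intro i j
    fin_cases i <;> fin_cases j <;> simp [he, hf, hef, hfe, -inner_self_eq_norm_sq_to_K]
  have := ho.sum_inner_products_le (s := Finset.univ) y
  simpa [Fin.sum_univ_two] using this

include hinv hsa he hf hef hJe hJf in
lemma myJ_pos (hpq : p ^ 2 - q ^ 2 = 1) (hp : 1 ≤ p) (y : H) (hy : y ≠ 0) :
    0 < kform J₀ (myJ J₀ e f p q y) y := by
  rw [myJ_kform J₀ e f p q hinv hJe hJf y, Complex.zero_lt_real]
  set a : ℂ := ⟪e, y⟫ with ha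
  set b : ℂ := ⟪f, y⟫ with hb
  set t : ℝ := ((starRingEnd ℂ) b * a).re with htdef
  have hN : (0 : ℝ) < ‖y‖ ^ 2 := by
    have := norm_pos_iff.mpr hy
    positivity
  have hs_le : ‖a‖ ^ 2 + ‖b‖ ^ 2 ≤ ‖y‖ ^ 2 := bessel_two e f he hf hef y
  have hs0 : (0 : ℝ) ≤ ‖a‖ ^ 2 + ‖b‖ ^ 2 := by positivity
  have ht : 2 * |t| ≤ ‖a‖ ^ 2 + ‖b‖ ^ 2 := by
    have h1 : |t| ≤ ‖(starRingEnd ℂ) b * a‖ := Complex.abs_re_le_norm _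
    have h2 : ‖(starRingEnd ℂ) b * a‖ = ‖b‖ * ‖a‖ := by
      rw [norm_mul, RCLike.norm_conj]
    nlinarith [sq_nonneg (‖a‖ - ‖b‖), norm_nonneg a, norm_nonneg b]
  have hq : |q| < p := by
    have h1 : q ^ 2 < p ^ 2 := by nlinarith
    have h2 : |q| ^ 2 < p ^ 2 := by rwa [sq_abs]
    nlinarith [abs_nonneg q]
  have hple : p ≤ 1 + |q| := by
    nlinarith [abs_nonneg q, sq_abs q]
  have h1 : -(|q| * (‖a‖ ^ 2 + ‖b‖ ^ 2)) ≤ q * (2 * t) := by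
    have h2 : |q * (2 * t)| = |q| * (2 * |t|) := by
      rw [abs_mul, abs_mul, abs_two]
    have h3 : -(|q * (2 * t)|) ≤ q * (2 * t) := neg_abs_le _
    nlinarith [abs_nonneg q]
  nlinarith [mul_nonneg (by linarith : (0:ℝ) ≤ 1 + |q| - p)
      (by linarith : (0:ℝ) ≤ ‖y‖ ^ 2 - (‖a‖ ^ 2 + ‖b‖ ^ 2)),
    mul_pos (by linarith : (0:ℝ) < p - |q|) hN]

include hinv hsa he hf hef hJe hJf in
lemma myJ_fund (hpq : p ^ 2 - q ^ 2 = 1) (hp : 1 ≤ p) :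
    IsFundamentalSymmetry J₀ (myJ J₀ e f p q) :=
  ⟨myJ_invol J₀ e f p q hinv hsa he hf hef hJe hJf hpq,
   myJ_symm J₀ e f p q hinv hsa hJe hJf,
   myJ_pos J₀ e f p q hinv hsa he hf hef hJe hJf hpq hp⟩

end aux

set_option maxHeartbeats 1000000 in
theorem range_jnorm_of_neutral
    {H : Type*} [NormedAddCommGroup H] [InnerProductSpace ℂ H] [CompleteSpace H]
    (J₀ : H →L[ℂ] H)
    (hinv : ∀ x, J₀ (J₀ x) = x)
    (hsa : ∀ x y : H, (inner ℂ (J₀ x) y : ℂ) = inner ℂ x (J₀ y))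
    (hindef : ∃ u v : H, 0 < kform J₀ u u ∧ kform J₀ v v < 0)
    (x : H) (hx0 : x ≠ 0) (hx : kform J₀ x x = 0) :
    {r : ℝ | ∃ J : H →L[ℂ] H, IsFundamentalSymmetry J₀ J ∧ jnorm J₀ J x = r} =
      Set.Ioi (0 : ℝ) := by
  ext r
  simp only [Set.mem_setOf_eq, Set.mem_Ioi]
  constructor
  · rintro ⟨J, hJ, rfl⟩
    have h := hJ.2.2 x hx0
    have hre : 0 < (kform J₀ (J x) x).re := by
      have := Complex.lt_def.mp h
      simpa using this.1
    exact Real.sqrt_pos.mpr hre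
  · intro hr
    -- neutral decomposition
    have hJx : (inner ℂ (J₀ x) x : ℂ) = 0 := hx
    have hxJ : (inner ℂ x (J₀ x) : ℂ) = 0 := by
      rw [← inner_conj_symm, hJx, map_zero]
    have hJJ : (inner ℂ (J₀ x) (J₀ x) : ℂ) = inner ℂ x x := by
      rw [hsa, hinv]
    obtain ⟨u, hu⟩ : ∃ u : H, u = x + J₀ x := ⟨_, rfl⟩
    obtain ⟨w, hw⟩ : ∃ w : H, w = x - J₀ x := ⟨_, rfl⟩
    have huu : (inner ℂ u u : ℂ) = 2 * inner ℂ x x := by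
      simp only [hu, inner_add_left, inner_add_right, hJx, hxJ, hJJ]
      ring
    have hww : (inner ℂ w w : ℂ) = 2 * inner ℂ x x := by
      simp only [hw, inner_sub_left, inner_sub_right, hJx, hxJ, hJJ]
      ring
    have huw : (inner ℂ u w : ℂ) = 0 := by
      simp only [hu, hw, inner_add_left, inner_sub_right, hJx, hxJ, hJJ]
      ring
    obtain ⟨c, hcdef⟩ : ∃ c : ℝ, c = Real.sqrt (2 * ‖x‖ ^ 2) := ⟨_, rfl⟩
    have hx2 : (0:ℝ) < 2 * ‖x‖ ^ 2 := by
      have := norm_pos_iff.mpr hx0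
      positivity
    have hc : 0 < c := by rw [hcdef]; exact Real.sqrt_pos.mpr hx2
    have hc2 : c ^ 2 = 2 * ‖x‖ ^ 2 := by rw [hcdef]; exact Real.sq_sqrt hx2.le
    have hcne : ((c : ℂ)) ≠ 0 := by exact_mod_cast hc.ne'
    have hxx : (inner ℂ x x : ℂ) = ((‖x‖ : ℂ)) ^ 2 := by
      rw [inner_self_eq_norm_sq_to_K]
      norm_cast
    have hcc : ((c : ℂ)) * c = 2 * ((‖x‖ : ℂ)) ^ 2 := by
      have h : (c : ℝ) * c = 2 * ‖x‖ ^ 2 := by nlinarith [hc2]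
      exact_mod_cast congrArg (fun t : ℝ => (t : ℂ)) h
    obtain ⟨e, he_def⟩ : ∃ e : H, e = ((c : ℂ))⁻¹ • u := ⟨_, rfl⟩
    obtain ⟨f, hf_def⟩ : ∃ f : H, f = ((c : ℂ))⁻¹ • w := ⟨_, rfl⟩
    have he : (inner ℂ e e : ℂ) = 1 := by
      rw [he_def, inner_smul_left, inner_smul_right, huu, hxx, map_inv₀, Complex.conj_ofReal,
        ← hcc]
      field_simp
    have hf : (inner ℂ f f : ℂ) = 1 := by
      rw [hf_def, inner_smul_left, inner_smul_right, hww, hxx, map_inv₀, Complex.conj_ofReal,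
        ← hcc]
      field_simp
    have hef : (inner ℂ e f : ℂ) = 0 := by
      rw [he_def, hf_def, inner_smul_left, inner_smul_right, huw]
      ring
    have hfe : (inner ℂ f e : ℂ) = 0 := by
      rw [← inner_conj_symm, hef, map_zero]
    have hJe : J₀ e = e := by
      rw [he_def, map_smul, hu, map_add, hinv]
      rw [show J₀ x + x = x + J₀ x from by abel]
    have hJf : J₀ f = -f := by
      rw [hf_def, map_smul, hw, map_sub, hinv]
      rw [show J₀ x - x = -(x - J₀ x) from by abel, smul_neg]
    have hx_ef : ((c : ℂ) / 2) • e + ((c : ℂ) / 2) • f = x := by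
      rw [he_def, hf_def, smul_smul, smul_smul, hu, hw]
      match_scalars <;> (field_simp; try ring)
    have ha : (inner ℂ e x : ℂ) = ((c / 2 : ℝ) : ℂ) := by
      conv_lhs => rw [← hx_ef]
      rw [inner_add_right, inner_smul_right, inner_smul_right, he, hef]
      push_cast
      ring
    have hb : (inner ℂ f x : ℂ) = ((c / 2 : ℝ) : ℂ) := by
      conv_lhs => rw [← hx_ef]
      rw [inner_add_right, inner_smul_right, inner_smul_right, hfe, hf]
      push_cast
      ring
    -- choose the parameters
    have hX : (0 : ℝ) < ‖x‖ ^ 2 := by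
      have := norm_pos_iff.mpr hx0
      positivity
    obtain ⟨m, hm_def⟩ : ∃ m : ℝ, m = r ^ 2 / ‖x‖ ^ 2 := ⟨_, rfl⟩
    have hm : 0 < m := by rw [hm_def]; positivity
    have hmi : m * m⁻¹ = 1 := mul_inv_cancel₀ hm.ne'
    obtain ⟨p, hp_def⟩ : ∃ p : ℝ, p = (m + m⁻¹) / 2 := ⟨_, rfl⟩
    obtain ⟨q, hq_def⟩ : ∃ q : ℝ, q = (m - m⁻¹) / 2 := ⟨_, rfl⟩
    have hpq : p ^ 2 - q ^ 2 = 1 := by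
      rw [hp_def, hq_def]
      field_simp
      ring
    have hp1 : 1 ≤ p := by
      rw [hp_def]
      nlinarith [sq_nonneg (m - 1), hm, hmi]
    refine ⟨myJ J₀ e f p q, myJ_fund J₀ e f p q hinv hsa he hf hef hJe hJf hpq hp1, ?_⟩
    have hk := myJ_kform J₀ e f p q hinv hJe hJf x
    rw [ha, hb] at hk
    have hjn : jnorm J₀ (myJ J₀ e f p q) x
        = Real.sqrt ((kform J₀ (myJ J₀ e f p q x) x).re) := rfl
    rw [hjn, hk, Complex.ofReal_re]
    have hnc : ‖(((c / 2 : ℝ)) : ℂ)‖ = c / 2 := by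
      rw [Complex.norm_real]
      exact abs_of_pos (by positivity)
    have hre : ((starRingEnd ℂ) (((c / 2 : ℝ)) : ℂ) * (((c / 2 : ℝ)) : ℂ)).re
        = (c / 2) * (c / 2) := by
      rw [Complex.conj_ofReal, ← Complex.ofReal_mul, Complex.ofReal_re]
    rw [hnc, hre]
    have hkey : ‖x‖ ^ 2 + (p - 1) * ((c / 2) ^ 2 + (c / 2) ^ 2) + q * (2 * ((c / 2) * (c / 2)))
        = r ^ 2 := by
      have h4 : (c / 2) * (c / 2) = ‖x‖ ^ 2 / 2 := by linear_combination hc2 / 4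
      have hXm : ‖x‖ ^ 2 * m = r ^ 2 := by
        rw [hm_def]
        field_simp
      rw [hp_def, hq_def]
      linear_combination 2 * (m - 1) * h4 + hXm
    rw [hkey]
    exact Real.sqrt_sq hr.le
end

section
/- Assume the form [·,·] is indefinite and let x ∈ H with [x, x] ≠ 0. Then for each real number a with a > |[x, x]|^{1/2} there exists a fundamental symmetry J_a of (H, [·,·]) such that ‖x‖_{J_a} = a. -/
open scoped ComplexOrder

open scoped InnerProductSpace

section Aux
variable {H : Type*} [NormedAddCommGroup H] [InnerProductSpace ℂ H]
noncomputable def boostOp (J₀ : H →L[ℂ] H) (e f : H) (c d : ℝ) : H →L[ℂ] H :=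
  J₀ + ((c:ℂ)-1) • ((innerSL ℂ e).smulRight e - (innerSL ℂ f).smulRight f)
     + (d:ℂ) • ((innerSL ℂ e).smulRight f - (innerSL ℂ f).smulRight e)

lemma boostOp_apply (J₀ : H →L[ℂ] H) (e f : H) (c d : ℝ) (y : H) :
    boostOp J₀ e f c d y =
      J₀ y + ((c:ℂ)-1) • (⟪e,y⟫_ℂ • e - ⟪f,y⟫_ℂ • f)
        + (d:ℂ) • (⟪e,y⟫_ℂ • f - ⟪f,y⟫_ℂ • e) := by
  simp [boostOp]

variable (J₀ : H →L[ℂ] H)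
    (hinv : ∀ x, J₀ (J₀ x) = x)
    (hsa : ∀ x y : H, (inner ℂ (J₀ x) y : ℂ) = inner ℂ x (J₀ y))
    (e f : H) (he1 : J₀ e = e) (hf1 : J₀ f = -f)
    (hee : ⟪e,e⟫_ℂ = 1) (hff : ⟪f,f⟫_ℂ = 1)
    (c d : ℝ) (hcd : c^2 - d^2 = 1) (hc : 0 < c)

include hsa he1 hf1 in
lemma hef' : ⟪e,f⟫_ℂ = 0 := by
  have h := hsa e f
  rw [he1, hf1, inner_neg_right] at h
  linear_combination h / 2

include hsa he1 hf1 in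
lemma hfe' : ⟪f,e⟫_ℂ = 0 := by
  rw [← inner_conj_symm, hef' J₀ hsa e f he1 hf1, map_zero]

include hsa he1 in
lemma heJ' : ∀ z, ⟪e, J₀ z⟫_ℂ = ⟪e, z⟫_ℂ := by
  intro z; rw [← hsa, he1]

include hsa hf1 in
lemma hfJ' : ∀ z, ⟪f, J₀ z⟫_ℂ = -⟪f, z⟫_ℂ := by
  intro z; rw [← hsa, hf1, inner_neg_left]

include hinv hsa he1 hf1 hee hff hcd in
lemma boost_invol : ∀ y, boostOp J₀ e f c d (boostOp J₀ e f c d y) = y := by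
  intro y
  have hef := hef' J₀ hsa e f he1 hf1
  have hfe := hfe' J₀ hsa e f he1 hf1
  have heJ := heJ' J₀ hsa e he1
  have hfJ := hfJ' J₀ hsa f hf1
  have hcdC : (c:ℂ)^2 - (d:ℂ)^2 = 1 := by exact_mod_cast congrArg (Complex.ofReal ·) hcd
  rw [boostOp_apply, boostOp_apply]
  simp only [map_add, map_smul, map_sub, he1, hf1, hinv y,
    inner_add_right, inner_smul_right, inner_sub_right, hee, hff, hef, hfe, heJ, hfJ]
  match_scalars <;>
    first
      | ring1
      | linear_combination ⟪e,y⟫_ℂ * hcdC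
      | linear_combination -⟪e,y⟫_ℂ * hcdC
      | linear_combination ⟪f,y⟫_ℂ * hcdC
      | linear_combination -⟪f,y⟫_ℂ * hcdC
      | linear_combination (⟪e,y⟫_ℂ-⟪f,y⟫_ℂ) * hcdC
      | linear_combination (⟪f,y⟫_ℂ-⟪e,y⟫_ℂ) * hcdC
      | linear_combination (⟪e,y⟫_ℂ+⟪f,y⟫_ℂ) * hcdC
      | linear_combination (-⟪e,y⟫_ℂ-⟪f,y⟫_ℂ) * hcdC
      | linear_combination (2*⟪e,y⟫_ℂ) * hcdC
      | linear_combination (-2*⟪e,y⟫_ℂ) * hcdC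
      | linear_combination (2*⟪f,y⟫_ℂ) * hcdC
      | linear_combination (-2*⟪f,y⟫_ℂ) * hcdC
      | linear_combination (2*⟪e,y⟫_ℂ-⟪f,y⟫_ℂ) * hcdC
      | linear_combination (⟪f,y⟫_ℂ-2*⟪e,y⟫_ℂ) * hcdC
      | linear_combination (2*⟪f,y⟫_ℂ-⟪e,y⟫_ℂ) * hcdC
      | linear_combination (⟪e,y⟫_ℂ-2*⟪f,y⟫_ℂ) * hcdC

include hinv hsa he1 hf1 hee hff in
lemma boost_sym : ∀ u v, kform J₀ (boostOp J₀ e f c d u) v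
    = kform J₀ u (boostOp J₀ e f c d v) := by
  intro u v
  have hef := hef' J₀ hsa e f he1 hf1
  have hfe := hfe' J₀ hsa e f he1 hf1
  have heJ := heJ' J₀ hsa e he1
  have hfJ := hfJ' J₀ hsa f hf1
  simp only [kform, boostOp_apply, map_add, map_smul, map_sub, hinv, he1, hf1, hsa,
    inner_add_left, inner_add_right, inner_smul_left, inner_smul_right,
    inner_sub_left, inner_sub_right, inner_neg_left, inner_neg_right,
    heJ, hfJ, hee, hff, hef, hfe, Complex.conj_ofReal, map_sub, map_one,
    inner_conj_symm]
  ring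

include hinv hsa he1 hf1 hee hff in
lemma boost_self_form : ∀ y, kform J₀ (boostOp J₀ e f c d y) y
    = ((‖y‖^2 + (c-1)*(‖⟪e,y⟫_ℂ‖^2 + ‖⟪f,y⟫_ℂ‖^2)
        - 2*d*((starRingEnd ℂ) ⟪e,y⟫_ℂ * ⟪f,y⟫_ℂ).re : ℝ) : ℂ) := by
  intro y
  have hef := hef' J₀ hsa e f he1 hf1
  have hfe := hfe' J₀ hsa e f he1 hf1
  have heJ := heJ' J₀ hsa e he1
  have hfJ := hfJ' J₀ hsa f hf1
  have h1 : kform J₀ (boostOp J₀ e f c d y) y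
      = (‖y‖^2 : ℂ) + ((c:ℂ)-1) * ((starRingEnd ℂ) ⟪e,y⟫_ℂ * ⟪e,y⟫_ℂ
          + (starRingEnd ℂ) ⟪f,y⟫_ℂ * ⟪f,y⟫_ℂ)
        - (d:ℂ) * ((starRingEnd ℂ) ⟪e,y⟫_ℂ * ⟪f,y⟫_ℂ
          + (starRingEnd ℂ) ((starRingEnd ℂ) ⟪e,y⟫_ℂ * ⟪f,y⟫_ℂ)) := by
    simp only [kform, boostOp_apply, map_add, map_smul, map_sub, hinv, he1, hf1,
      inner_add_left, inner_smul_left, inner_sub_left, inner_neg_left,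
      inner_conj_symm, inner_self_eq_norm_sq_to_K, Complex.conj_ofReal,
      map_mul, map_sub, map_one, RingHomCompTriple.comp_apply, Complex.conj_conj,
      RCLike.ofReal_alg, Complex.coe_algebraMap, Complex.real_smul, mul_one]
    ring
  rw [h1, Complex.add_conj]
  have he2 : (starRingEnd ℂ) ⟪e,y⟫_ℂ * ⟪e,y⟫_ℂ = ((‖⟪e,y⟫_ℂ‖^2 : ℝ) : ℂ) := by
    push_cast
    exact Complex.conj_mul' _
  have hf2 : (starRingEnd ℂ) ⟪f,y⟫_ℂ * ⟪f,y⟫_ℂ = ((‖⟪f,y⟫_ℂ‖^2 : ℝ) : ℂ) := by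
    push_cast
    exact Complex.conj_mul' _
  rw [he2, hf2]
  push_cast
  ring

include hinv hsa he1 hf1 hee hff hcd hc in
lemma boost_pos : ∀ y, y ≠ 0 → 0 < kform J₀ (boostOp J₀ e f c d y) y := by
  intro y hy
  rw [boost_self_form J₀ hinv hsa e f he1 hf1 hee hff c d y]
  rw [Complex.zero_lt_real]
  set α := ⟪e,y⟫_ℂ
  set β := ⟪f,y⟫_ℂ
  have hy2 : 0 < ‖y‖^2 := by have := norm_pos_iff.mpr hy; positivity
  have hdc : |d| < c := by nlinarith [sq_abs d, abs_nonneg d]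
  have hm : |((starRingEnd ℂ) α * β).re| ≤ ‖α‖ * ‖β‖ := by
    calc |((starRingEnd ℂ) α * β).re| ≤ ‖(starRingEnd ℂ) α * β‖ :=
          Complex.abs_re_le_norm _
      _ = ‖α‖ * ‖β‖ := by rw [norm_mul, Complex.norm_conj]
  have hdm : d * ((starRingEnd ℂ) α * β).re ≤ |d| * (‖α‖ * ‖β‖) := by
    calc d * ((starRingEnd ℂ) α * β).re ≤ |d * ((starRingEnd ℂ) α * β).re| := le_abs_self _
      _ = |d| * |((starRingEnd ℂ) α * β).re| := abs_mul _ _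
      _ ≤ |d| * (‖α‖ * ‖β‖) := by
          exact mul_le_mul_of_nonneg_left hm (abs_nonneg d)
  have hon : Orthonormal ℂ ![e,f] := by
    have hef := hef' J₀ hsa e f he1 hf1
    have hfe := hfe' J₀ hsa e f he1 hf1
    have hne : ‖e‖ = 1 := by
      have h : ‖e‖ ^ 2 = 1 := by rw [@norm_sq_eq_re_inner ℂ, hee]; simp
      nlinarith [norm_nonneg e]
    have hfn : ‖f‖ = 1 := by
      have h : ‖f‖ ^ 2 = 1 := by rw [@norm_sq_eq_re_inner ℂ, hff]; simp
      nlinarith [norm_nonneg f]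
    rw [orthonormal_iff_ite]
    intro i j
    fin_cases i <;> fin_cases j <;> simp [hee, hff, hef, hfe, hne, hfn]
  have hBessel : ‖α‖^2 + ‖β‖^2 ≤ ‖y‖^2 := by
    have h := hon.sum_inner_products_le y (s := Finset.univ)
    simpa [Fin.sum_univ_two] using h
  have hdm' : -(d * ((starRingEnd ℂ) α * β).re) ≤ |d| * (‖α‖ * ‖β‖) := by
    calc -(d * ((starRingEnd ℂ) α * β).re) ≤ |d * ((starRingEnd ℂ) α * β).re| := neg_le_abs _
      _ = |d| * |((starRingEnd ℂ) α * β).re| := abs_mul _ _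
      _ ≤ |d| * (‖α‖ * ‖β‖) := mul_le_mul_of_nonneg_left hm (abs_nonneg d)
  have h2 : 2*(‖α‖ * ‖β‖) ≤ ‖α‖^2 + ‖β‖^2 := by
    nlinarith [sq_nonneg (‖α‖ - ‖β‖)]
  have h3 : |d| * (2*(‖α‖ * ‖β‖)) ≤ |d| * (‖α‖^2 + ‖β‖^2) :=
    mul_le_mul_of_nonneg_left h2 (abs_nonneg d)
  have h4 : 2 * (d * ((starRingEnd ℂ) α * β).re) ≤ |d| * (‖α‖^2 + ‖β‖^2) := by
    nlinarith [hdm]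
  rcases eq_or_lt_of_le (show (0:ℝ) ≤ ‖α‖^2 + ‖β‖^2 by positivity) with hA | hA
  · have hab : ‖α‖ * ‖β‖ = 0 := by nlinarith [mul_nonneg (norm_nonneg α) (norm_nonneg β)]
    have hdm0 : d * ((starRingEnd ℂ) α * β).re = 0 := by
      rw [hab, mul_zero] at hdm hdm'; linarith
    rw [← hA]
    nlinarith [hdm0]
  · have h5 : 0 < (c - |d|) * (‖α‖^2 + ‖β‖^2) :=
      mul_pos (sub_pos.mpr hdc) hA
    nlinarith [h4, h5, hBessel]

end Aux

set_option maxHeartbeats 1600000 in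
theorem exists_fundamentalSymmetry_jnorm_eq_of_form_ne_zero
    {H : Type*} [NormedAddCommGroup H] [InnerProductSpace ℂ H] [CompleteSpace H]
    (J₀ : H →L[ℂ] H)
    (hinv : ∀ x, J₀ (J₀ x) = x)
    (hsa : ∀ x y : H, (inner ℂ (J₀ x) y : ℂ) = inner ℂ x (J₀ y))
    (hindef : ∃ u v : H, 0 < kform J₀ u u ∧ kform J₀ v v < 0)
    (x : H) (hx : kform J₀ x x ≠ 0)
    (a : ℝ) (ha : Real.sqrt ‖kform J₀ x x‖ < a) :
    ∃ Ja : H →L[ℂ] H, IsFundamentalSymmetry J₀ Ja ∧ jnorm J₀ Ja x = a := by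
  obtain ⟨u, v, hu, hv⟩ := hindef
  have horth : ∀ w z : H, J₀ w = w → J₀ z = -z → ⟪w, z⟫_ℂ = 0 := by
    intro w z hw hz
    have h := hsa w z
    rw [hw, hz, inner_neg_right] at h
    linear_combination h / 2
  set Pp : H → H := fun w => (2:ℂ)⁻¹ • (w + J₀ w) with hPp
  set Pm : H → H := fun w => (2:ℂ)⁻¹ • (w - J₀ w) with hPm
  have hPpJ : ∀ w, J₀ (Pp w) = Pp w := by
    intro w
    simp only [hPp, map_smul, map_add, hinv]
    rw [add_comm]
  have hPmJ : ∀ w, J₀ (Pm w) = -(Pm w) := by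
    intro w
    simp only [hPm, map_smul, map_sub, hinv]
    rw [← smul_neg, neg_sub]
  have hsum : ∀ w, Pp w + Pm w = w := by
    intro w
    simp only [hPp, hPm]
    match_scalars <;> ring
  have hiPM : ∀ w z, ⟪Pp w, Pm z⟫_ℂ = 0 := fun w z => horth _ _ (hPpJ w) (hPmJ z)
  have hiMP : ∀ w z, ⟪Pm w, Pp z⟫_ℂ = 0 := by
    intro w z
    rw [← inner_conj_symm, hiPM, map_zero]
  have hform : ∀ w, kform J₀ w w = ((‖Pp w‖^2 - ‖Pm w‖^2 : ℝ) : ℂ) := by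
    intro w
    have hJw : J₀ w = Pp w - Pm w := by
      have h1 : J₀ (Pp w + Pm w) = Pp w - Pm w := by
        rw [map_add, hPpJ, hPmJ]
        abel
      rw [← h1, hsum]
    calc kform J₀ w w = ⟪Pp w - Pm w, Pp w + Pm w⟫_ℂ := by rw [kform, hJw, hsum]
      _ = ((‖Pp w‖^2 - ‖Pm w‖^2 : ℝ) : ℂ) := by
        simp only [inner_sub_left, inner_add_right, hiPM, hiMP,
          inner_self_eq_norm_sq_to_K, RCLike.ofReal_alg, Complex.coe_algebraMap,
          Complex.real_smul, mul_one]
        push_cast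
        ring
  have hxnorm2 : ‖x‖^2 = ‖Pp x‖^2 + ‖Pm x‖^2 := by
    have h := norm_add_sq (𝕜 := ℂ) (Pp x) (Pm x)
    rw [hsum] at h
    have h0 : RCLike.re ⟪Pp x, Pm x⟫_ℂ = 0 := by rw [hiPM]; simp
    rw [h0] at h
    linarith
  -- existence of e
  have hex_e : ∃ e : H, J₀ e = e ∧ ⟪e,e⟫_ℂ = 1 ∧ ⟪e, x⟫_ℂ = ((‖Pp x‖ : ℝ) : ℂ) := by
    by_cases hP : Pp x = 0
    · -- use u
      have hu' : (0:ℝ) < ‖Pp u‖^2 - ‖Pm u‖^2 := by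
        rw [hform u] at hu
        exact Complex.zero_lt_real.mp hu
      have hPu : Pp u ≠ 0 := by
        intro h0
        rw [h0, norm_zero] at hu'
        nlinarith [sq_nonneg ‖Pm u‖]
      have hPune : ((‖Pp u‖:ℂ)) ≠ 0 := by
        simpa using norm_ne_zero_iff.mpr hPu
      refine ⟨((‖Pp u‖:ℂ))⁻¹ • Pp u, ?_, ?_, ?_⟩
      · rw [map_smul, hPpJ]
      · rw [inner_smul_left, inner_smul_right, inner_self_eq_norm_sq_to_K]
        rw [map_inv₀, Complex.conj_ofReal]
        field_simp
        try ring
        rfl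
      · have h0 : ⟪Pp u, x⟫_ℂ = 0 := by
          rw [show ⟪Pp u, x⟫_ℂ = ⟪Pp u, Pp x⟫_ℂ + ⟪Pp u, Pm x⟫_ℂ from by
            rw [← inner_add_right, hsum]]
          rw [hiPM, hP, inner_zero_right, zero_add]
        rw [inner_smul_left, h0, mul_zero, hP, norm_zero]
        simp
    · have hPne : ((‖Pp x‖:ℂ)) ≠ 0 := by simpa using norm_ne_zero_iff.mpr hP
      refine ⟨((‖Pp x‖:ℂ))⁻¹ • Pp x, ?_, ?_, ?_⟩
      · rw [map_smul, hPpJ]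
      · rw [inner_smul_left, inner_smul_right, inner_self_eq_norm_sq_to_K]
        rw [map_inv₀, Complex.conj_ofReal]
        field_simp
        try ring
        rfl
      · rw [inner_smul_left, map_inv₀, Complex.conj_ofReal]
        have : ⟪Pp x, x⟫_ℂ = ((‖Pp x‖^2 : ℝ) : ℂ) := by
          rw [show ⟪Pp x, x⟫_ℂ = ⟪Pp x, Pp x⟫_ℂ + ⟪Pp x, Pm x⟫_ℂ from by
            rw [← inner_add_right, hsum]]
          rw [hiPM, add_zero, inner_self_eq_norm_sq_to_K]
          norm_cast
        rw [this]
        field_simp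
        push_cast
        ring
  have hex_f : ∃ f : H, J₀ f = -f ∧ ⟪f,f⟫_ℂ = 1 ∧ ⟪f, x⟫_ℂ = ((‖Pm x‖ : ℝ) : ℂ) := by
    by_cases hP : Pm x = 0
    · have hv' : (0:ℝ) < ‖Pm v‖^2 - ‖Pp v‖^2 := by
        rw [hform v] at hv
        have h := Complex.real_lt_real.mp (show ((‖Pp v‖^2 - ‖Pm v‖^2:ℝ):ℂ) < ((0:ℝ):ℂ) by
          exact_mod_cast hv)
        linarith
      have hPv : Pm v ≠ 0 := by
        intro h0
        rw [h0, norm_zero] at hv'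
        nlinarith [sq_nonneg ‖Pp v‖]
      have hPvne : ((‖Pm v‖:ℂ)) ≠ 0 := by simpa using norm_ne_zero_iff.mpr hPv
      refine ⟨((‖Pm v‖:ℂ))⁻¹ • Pm v, ?_, ?_, ?_⟩
      · rw [map_smul, hPmJ, smul_neg]
      · rw [inner_smul_left, inner_smul_right, inner_self_eq_norm_sq_to_K]
        rw [map_inv₀, Complex.conj_ofReal]
        field_simp
        try ring
        rfl
      · have h0 : ⟪Pm v, x⟫_ℂ = 0 := by
          rw [show ⟪Pm v, x⟫_ℂ = ⟪Pm v, Pp x⟫_ℂ + ⟪Pm v, Pm x⟫_ℂ from by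
            rw [← inner_add_right, hsum]]
          rw [hiMP, hP, inner_zero_right, zero_add]
        rw [inner_smul_left, h0, mul_zero, hP, norm_zero]
        simp
    · have hPne : ((‖Pm x‖:ℂ)) ≠ 0 := by simpa using norm_ne_zero_iff.mpr hP
      refine ⟨((‖Pm x‖:ℂ))⁻¹ • Pm x, ?_, ?_, ?_⟩
      · rw [map_smul, hPmJ, smul_neg]
      · rw [inner_smul_left, inner_smul_right, inner_self_eq_norm_sq_to_K]
        rw [map_inv₀, Complex.conj_ofReal]
        field_simp
        try ring
        rfl
      · rw [inner_smul_left, map_inv₀, Complex.conj_ofReal]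
        have : ⟪Pm x, x⟫_ℂ = ((‖Pm x‖^2 : ℝ) : ℂ) := by
          rw [show ⟪Pm x, x⟫_ℂ = ⟪Pm x, Pp x⟫_ℂ + ⟪Pm x, Pm x⟫_ℂ from by
            rw [← inner_add_right, hsum]]
          rw [hiMP, zero_add, inner_self_eq_norm_sq_to_K]
          norm_cast
        rw [this]
        field_simp
        push_cast
        ring
  obtain ⟨e, he1, hee, hex⟩ := hex_e
  obtain ⟨f, hf1, hff, hfx⟩ := hex_f
  set p := ‖Pp x‖ with hp'
  set q := ‖Pm x‖ with hq'
  have hp : 0 ≤ p := norm_nonneg _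
  have hq : 0 ≤ q := norm_nonneg _
  have hformx : kform J₀ x x = ((p^2 - q^2 : ℝ) : ℂ) := hform x
  clear_value p q
  have hpq0 : p^2 - q^2 ≠ 0 := by
    intro h
    apply hx
    rw [hformx]
    norm_cast
  have habs : ‖kform J₀ x x‖ = |p^2 - q^2| := by
    rw [hformx, Complex.norm_real, Real.norm_eq_abs]
  have ha0 : 0 < a := lt_of_le_of_lt (Real.sqrt_nonneg _) ha
  have ha2 : |p^2 - q^2| < a^2 := by
    rw [habs] at ha
    nlinarith [Real.sq_sqrt (abs_nonneg (p^2 - q^2)), Real.sqrt_nonneg |p^2 - q^2|]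
  set A := p^2 + q^2 with hA'
  set B := 2*(p*q) with hB'
  clear_value A B
  have hABpos : 0 < A - B := by
    have hne : p ≠ q := by
      intro h
      exact hpq0 (by rw [h]; ring)
    have h1 : (0:ℝ) < (p - q)^2 :=
      lt_of_le_of_ne (sq_nonneg _) (Ne.symm (pow_ne_zero 2 (sub_ne_zero.mpr hne)))
    rw [hA', hB']
    nlinarith [h1]
  have hA2B2 : A^2 - B^2 = (p^2 - q^2)^2 := by rw [hA', hB']; ring
  have hlt : |p^2 - q^2| * |p^2 - q^2| < a^2 * a^2 := mul_self_lt_mul_self (abs_nonneg _) ha2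
  have hs' : 0 ≤ a^4 - (A^2 - B^2) := by
    rw [hA2B2]
    nlinarith only [hlt, sq_abs (p^2 - q^2)]
  set s := Real.sqrt (a^4 - (A^2 - B^2)) with hsdef
  have hs2 : s^2 = a^4 - (A^2 - B^2) := Real.sq_sqrt hs'
  have hs0 : 0 ≤ s := Real.sqrt_nonneg _
  clear_value s
  set r := (a^2 + s)/(A - B) with hr'
  have hrpos : 0 < r := div_pos (by nlinarith [ha0, hs0, sq_nonneg a]) hABpos
  have hrAB : r * (A - B) = a^2 + s := by
    rw [hr', div_mul_cancel₀ _ (ne_of_gt hABpos)]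
  clear_value r
  have hquadkey : (A-B) * ((A-B)*r^2 + (A+B) - 2*a^2*r) = 0 := by
    linear_combination (r*(A-B) + s - a^2) * hrAB + hs2
  have hquad : (A-B)*r^2 + (A+B) - 2*a^2*r = 0 :=
    (mul_eq_zero.mp hquadkey).resolve_left (ne_of_gt hABpos)
  set c := (r + r⁻¹)/2 with hc'
  set d := (r - r⁻¹)/2 with hd'
  have hrne : r ≠ 0 := ne_of_gt hrpos
  have hcd : c^2 - d^2 = 1 := by
    rw [hc', hd']
    field_simp
    ring
  have hcpos : 0 < c := by
    rw [hc']
    positivity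
  have hval : c*A - d*B = a^2 := by
    rw [hc', hd']
    field_simp
    linear_combination hquad
  clear_value c d
  refine ⟨boostOp J₀ e f c d, ⟨boost_invol J₀ hinv hsa e f he1 hf1 hee hff c d hcd,
    boost_sym J₀ hinv hsa e f he1 hf1 hee hff c d,
    boost_pos J₀ hinv hsa e f he1 hf1 hee hff c d hcd hcpos⟩, ?_⟩
  have hform_x : kform J₀ (boostOp J₀ e f c d x) x = ((a^2 : ℝ) : ℂ) := by
    rw [boost_self_form J₀ hinv hsa e f he1 hf1 hee hff c d x, hex, hfx]
    congr 1
    rw [Complex.norm_real, Complex.norm_real, Real.norm_eq_abs, Real.norm_eq_abs, abs_of_nonneg hp, abs_of_nonneg hq,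
      Complex.conj_ofReal, ← Complex.ofReal_mul, Complex.ofReal_re, hxnorm2]
    linear_combination hval + (1-c) * hA' + d * hB'
  rw [jnorm, hform_x, Complex.ofReal_re]
  exact Real.sqrt_sq ha0.le
end

section
/- Let x ∈ H with x ≠ 0 and [x, x] = 0. Then for each real number a > 0 there exists a fundamental symmetry J_a of (H, [·,·]) such that ‖x‖_{J_a} = a. -/
open scoped ComplexOrder


noncomputable def symmAux {H : Type*} [NormedAddCommGroup H] [InnerProductSpace ℂ H]
    (J₀ : H →L[ℂ] H) (e f : H) (c s : ℝ) : H →L[ℂ] H :=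
  J₀ + (innerSL ℂ e).smulRight (((c : ℂ) - 1) • e - (s : ℂ) • f)
     + (innerSL ℂ f).smulRight ((s : ℂ) • e + (1 - (c : ℂ)) • f)

lemma symmAux_apply {H : Type*} [NormedAddCommGroup H] [InnerProductSpace ℂ H]
    (J₀ : H →L[ℂ] H) (e f : H) (c s : ℝ) (y : H) :
    symmAux J₀ e f c s y = J₀ y + (inner ℂ e y : ℂ) • (((c : ℂ) - 1) • e - (s : ℂ) • f)
      + (inner ℂ f y : ℂ) • ((s : ℂ) • e + (1 - (c : ℂ)) • f) := by
  simp [symmAux]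

lemma bessel_two_s5 {H : Type*} [NormedAddCommGroup H] [InnerProductSpace ℂ H]
    (e f : H)
    (hee : (inner ℂ e e : ℂ) = 1) (hff : (inner ℂ f f : ℂ) = 1)
    (hef : (inner ℂ e f : ℂ) = 0) (hfe : (inner ℂ f e : ℂ) = 0) (y : H) :
    ‖(inner ℂ e y : ℂ)‖^2 + ‖(inner ℂ f y : ℂ)‖^2 ≤ ‖y‖^2 := by
  set α := (inner ℂ e y : ℂ)
  set β := (inner ℂ f y : ℂ)
  set z := y - α • e - β • f with hz
  have hzz : (inner ℂ z z : ℂ) = ((‖y‖^2 - ‖α‖^2 - ‖β‖^2 : ℝ) : ℂ) := by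
    have h1 : (inner ℂ y y : ℂ) = ((‖y‖^2 : ℝ) : ℂ) := by
      rw [inner_self_eq_norm_sq_to_K]; norm_cast
    have hαe : (inner ℂ e y : ℂ) = α := rfl
    have hβf : (inner ℂ f y : ℂ) = β := rfl
    have hye : (inner ℂ y e : ℂ) = (starRingEnd ℂ) α := by rw [← inner_conj_symm]
    have hyf : (inner ℂ y f : ℂ) = (starRingEnd ℂ) β := by rw [← inner_conj_symm]
    have k1 := Complex.conj_mul' α
    have k2 := Complex.conj_mul' β
    simp only [hz, inner_sub_left, inner_sub_right, inner_smul_left, inner_smul_right,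
      hee, hff, hef, hfe, hαe, hβf, hye, hyf, h1]
    push_cast
    linear_combination - k1 - k2
  have h2 : (inner ℂ z z : ℂ) = ((‖z‖^2 : ℝ) : ℂ) := by
    rw [inner_self_eq_norm_sq_to_K]; norm_cast
  have h3 : ‖z‖^2 = ‖y‖^2 - ‖α‖^2 - ‖β‖^2 :=
    Complex.ofReal_injective (h2.symm.trans hzz)
  nlinarith [sq_nonneg ‖z‖]

section
variable {H : Type*} [NormedAddCommGroup H] [InnerProductSpace ℂ H]
  (J₀ : H →L[ℂ] H) (e f : H) (c s : ℝ)
  (hinv : ∀ x, J₀ (J₀ x) = x)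
  (hsa : ∀ x y : H, (inner ℂ (J₀ x) y : ℂ) = inner ℂ x (J₀ y))
  (hee : (inner ℂ e e : ℂ) = 1) (hff : (inner ℂ f f : ℂ) = 1)
  (hef : (inner ℂ e f : ℂ) = 0) (hfe : (inner ℂ f e : ℂ) = 0)
  (hJe : J₀ e = e) (hJf : J₀ f = -f)

include hinv hsa hee hff hef hfe hJe hJf in
lemma symmAux_inv (hcs : c^2 - s^2 = 1) :
    ∀ y, symmAux J₀ e f c s (symmAux J₀ e f c s y) = y := by
  intro y
  have h1 : (inner ℂ e (J₀ y) : ℂ) = inner ℂ e y := by rw [← hsa, hJe]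
  have h2 : (inner ℂ f (J₀ y) : ℂ) = - inner ℂ f y := by rw [← hsa, hJf, inner_neg_left]
  simp only [symmAux_apply, map_add, map_smul, hinv, map_sub, hJe, hJf,
    inner_add_right, inner_smul_right, inner_sub_right, hee, hff, hef, hfe, h1, h2,
    smul_smul, smul_sub, smul_add, smul_neg]
  have hc : (c:ℂ)^2 - (s:ℂ)^2 = 1 := by exact_mod_cast congrArg (Complex.ofReal) hcs
  match_scalars <;>
    first
      | ring1
      | linear_combination (-(inner ℂ e y : ℂ)) * hc
      | linear_combination (-(inner ℂ f y : ℂ)) * hc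
      | linear_combination ((inner ℂ e y : ℂ)) * hc
      | linear_combination ((inner ℂ f y : ℂ)) * hc

omit hee hff hef hfe in
include hinv hsa hJe hJf in
lemma symmAux_symm : ∀ x y, kform J₀ (symmAux J₀ e f c s x) y
    = kform J₀ x (symmAux J₀ e f c s y) := by
  intro x y
  have h1 : ∀ z, (inner ℂ (J₀ z) e : ℂ) = inner ℂ z e := by intro z; rw [hsa, hJe]
  have h2 : ∀ z, (inner ℂ (J₀ z) f : ℂ) = - inner ℂ z f := by
    intro z; rw [hsa, hJf, inner_neg_right]
  have h3 : (inner ℂ (J₀ x) (J₀ y) : ℂ) = inner ℂ x y := by rw [hsa, hinv]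
  simp only [kform, symmAux_apply, map_add, map_smul, hinv, hJe, hJf, smul_sub, smul_add,
    smul_neg, smul_smul, inner_add_left, inner_add_right, inner_smul_left,
    inner_smul_right, inner_sub_left, inner_sub_right, inner_neg_left, inner_neg_right,
    h1, h2, h3, ← inner_conj_symm x e, ← inner_conj_symm x f, map_mul, Complex.conj_ofReal,
    map_sub, map_one]
  ring

omit hee hff hef hfe in
include hinv hsa hJe hJf in
lemma symmAux_kform (y : H) : kform J₀ (symmAux J₀ e f c s y) y
    = ((‖y‖^2 + (c - 1) * (‖(inner ℂ e y : ℂ)‖^2 + ‖(inner ℂ f y : ℂ)‖^2)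
      + s * (2 * (((starRingEnd ℂ) ((inner ℂ e y : ℂ)) * (inner ℂ f y : ℂ)).re)) : ℝ) : ℂ) := by
  have h1 : ∀ z, (inner ℂ (J₀ z) e : ℂ) = inner ℂ z e := by intro z; rw [hsa, hJe]
  have h2 : ∀ z, (inner ℂ (J₀ z) f : ℂ) = - inner ℂ z f := by
    intro z; rw [hsa, hJf, inner_neg_right]
  have hny : (inner ℂ y y : ℂ) = ((‖y‖^2 : ℝ) : ℂ) := by
    rw [inner_self_eq_norm_sq_to_K]; norm_cast
  simp only [kform, symmAux_apply, map_add, map_smul, hinv, hJe, hJf, smul_sub, smul_add,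
    smul_neg, smul_smul, inner_add_left, inner_add_right, inner_smul_left,
    inner_smul_right, inner_sub_left, inner_sub_right, inner_neg_left, inner_neg_right,
    h1, h2, hny, map_mul, Complex.conj_ofReal, map_sub, map_one]
  set α := (inner ℂ e y : ℂ) with hα
  set β := (inner ℂ f y : ℂ) with hβ
  have k1 := Complex.conj_mul' α
  have k2 := Complex.conj_mul' β
  have k3 : (starRingEnd ℂ) α * β + α * (starRingEnd ℂ) β
      = 2 * ((((starRingEnd ℂ) α) * β).re : ℂ) := by
    have : α * (starRingEnd ℂ) β = (starRingEnd ℂ) ((starRingEnd ℂ) α * β) := by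
      rw [map_mul, Complex.conj_conj]
    rw [this, Complex.add_conj]; push_cast; ring
  push_cast
  linear_combination ((c:ℂ) - 1) * k1 + ((c:ℂ) - 1) * k2 + (s:ℂ) * k3

include hinv hsa hee hff hef hfe hJe hJf in
lemma symmAux_pos (hc0 : 0 < c) (hcs : c^2 - s^2 = 1) :
    ∀ y, y ≠ 0 → 0 < kform J₀ (symmAux J₀ e f c s y) y := by
  intro y hy
  rw [symmAux_kform J₀ e f c s hinv hsa hJe hJf y]
  rw [Complex.zero_lt_real]
  set α := (inner ℂ e y : ℂ)
  set β := (inner ℂ f y : ℂ)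
  set S := ‖α‖^2 + ‖β‖^2 with hSdef
  set T := 2 * (((starRingEnd ℂ) α) * β).re with hTdef
  have hS0 : 0 ≤ S := by positivity
  have hSE : S ≤ ‖y‖^2 := bessel_two_s5 e f hee hff hef hfe y
  have hE : 0 < ‖y‖^2 := by
    have := norm_pos_iff.mpr hy; positivity
  have hsc : |s| < c := by
    have h1 : |s|^2 < c^2 := by rw [sq_abs]; nlinarith
    nlinarith [abs_nonneg s]
  have hT : |T| ≤ S := by
    have h2 : |(((starRingEnd ℂ) α) * β).re| ≤ ‖α‖ * ‖β‖ := by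
      calc |(((starRingEnd ℂ) α) * β).re| ≤ ‖(starRingEnd ℂ) α * β‖ :=
            Complex.abs_re_le_norm _
        _ = ‖α‖ * ‖β‖ := by
            rw [norm_mul, Complex.norm_conj]
    have h3 : 2 * (‖α‖ * ‖β‖) ≤ ‖α‖^2 + ‖β‖^2 := by nlinarith [two_mul_le_add_sq ‖α‖ ‖β‖]
    rw [hTdef, abs_mul, abs_two]
    calc 2 * |(((starRingEnd ℂ) α) * β).re| ≤ 2 * (‖α‖ * ‖β‖) := by nlinarith
      _ ≤ S := h3
  have hsT : -( |s| * S) ≤ s * T := by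
    have h1 : |s * T| ≤ |s| * S := by
      rw [abs_mul]
      exact mul_le_mul_of_nonneg_left hT (abs_nonneg s)
    nlinarith [neg_abs_le (s * T)]
  rcases eq_or_lt_of_le hS0 with h | h
  · have hT0 : T = 0 := by
      have := hT; rw [← h] at this
      exact abs_eq_zero.mp (le_antisymm this (abs_nonneg T))
    rw [← h, hT0]; nlinarith
  · have h4 : 0 < (c - |s|) * S := mul_pos (by linarith) h
    nlinarith [abs_nonneg s]
end

theorem exists_fundamentalSymmetry_jnorm_eq_of_neutral
    {H : Type*} [NormedAddCommGroup H] [InnerProductSpace ℂ H] [CompleteSpace H]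
    (J₀ : H →L[ℂ] H)
    (hinv : ∀ x, J₀ (J₀ x) = x)
    (hsa : ∀ x y : H, (inner ℂ (J₀ x) y : ℂ) = inner ℂ x (J₀ y))
    (x : H) (hx0 : x ≠ 0) (hx : kform J₀ x x = 0)
    (a : ℝ) (ha : 0 < a) :
    ∃ Ja : H →L[ℂ] H, IsFundamentalSymmetry J₀ Ja ∧ jnorm J₀ Ja x = a := by
  set xp := ((2:ℂ)⁻¹) • (x + J₀ x) with hxp
  set xm := ((2:ℂ)⁻¹) • (x - J₀ x) with hxm
  have h0 : (inner ℂ (J₀ x) x : ℂ) = 0 := hx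
  have h0' : (inner ℂ x (J₀ x) : ℂ) = 0 := by rw [← hsa]; exact h0
  have hJJ : (inner ℂ (J₀ x) (J₀ x) : ℂ) = inner ℂ x x := by rw [hsa, hinv]
  have hxx : (inner ℂ x x : ℂ) = ((‖x‖^2 : ℝ) : ℂ) := by
    rw [inner_self_eq_norm_sq_to_K]; norm_cast
  have hp : (inner ℂ xp xp : ℂ) = ((‖x‖^2/2 : ℝ) : ℂ) := by
    simp only [hxp, inner_smul_left, inner_smul_right, inner_add_left, inner_add_right,
      h0, h0', hJJ, hxx, map_inv₀, map_ofNat]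
    push_cast; ring
  have hm : (inner ℂ xm xm : ℂ) = ((‖x‖^2/2 : ℝ) : ℂ) := by
    simp only [hxm, inner_smul_left, inner_smul_right, inner_sub_left, inner_sub_right,
      h0, h0', hJJ, hxx, map_inv₀, map_ofNat]
    push_cast; ring
  have hpm : (inner ℂ xp xm : ℂ) = 0 := by
    simp only [hxp, hxm, inner_smul_left, inner_smul_right, inner_add_left,
      inner_sub_right, h0, h0', hJJ, hxx, map_inv₀, map_ofNat]
    push_cast; ring
  have hmp : (inner ℂ xm xp : ℂ) = 0 := by
    simp only [hxp, hxm, inner_smul_left, inner_smul_right, inner_sub_left,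
      inner_add_right, h0, h0', hJJ, hxx, map_inv₀, map_ofNat]
    push_cast; ring
  set np := ‖xp‖ with hnpdef
  set nm := ‖xm‖ with hnmdef
  have hnp : np^2 = ‖x‖^2/2 := by
    refine Complex.ofReal_injective ?_
    rw [← hp, inner_self_eq_norm_sq_to_K]; norm_cast
  have hnm : nm^2 = ‖x‖^2/2 := by
    refine Complex.ofReal_injective ?_
    rw [← hm, inner_self_eq_norm_sq_to_K]; norm_cast
  have hnx : 0 < ‖x‖ := norm_pos_iff.mpr hx0
  have hnp0 : 0 < np := by nlinarith [norm_nonneg xp]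
  have hnm0 : 0 < nm := by nlinarith [norm_nonneg xm]
  have hnpm : np = nm := by nlinarith
  set e := ((np⁻¹ : ℝ) : ℂ) • xp with he
  set f := ((nm⁻¹ : ℝ) : ℂ) • xm with hf
  have hee : (inner ℂ e e : ℂ) = 1 := by
    simp only [he, inner_smul_left, inner_smul_right, Complex.conj_ofReal, hp]
    rw [show ((‖x‖^2/2 : ℝ) : ℂ) = ((np^2 : ℝ) : ℂ) by rw [hnp]]
    norm_cast
    field_simp
  have hff : (inner ℂ f f : ℂ) = 1 := by
    simp only [hf, inner_smul_left, inner_smul_right, Complex.conj_ofReal, hm]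
    rw [show ((‖x‖^2/2 : ℝ) : ℂ) = ((nm^2 : ℝ) : ℂ) by rw [hnm]]
    norm_cast
    field_simp
  have hef : (inner ℂ e f : ℂ) = 0 := by
    simp only [he, hf, inner_smul_left, inner_smul_right, Complex.conj_ofReal, hpm, mul_zero]
  have hfe : (inner ℂ f e : ℂ) = 0 := by
    simp only [he, hf, inner_smul_left, inner_smul_right, Complex.conj_ofReal, hmp, mul_zero]
  have hJe : J₀ e = e := by
    simp only [he, hxp, map_smul, map_add, hinv]
    rw [add_comm (J₀ x) x]
  have hJf : J₀ f = -f := by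
    simp only [hf, hxm, map_smul, map_sub, hinv]
    rw [show J₀ x - x = -(x - J₀ x) by abel]
    simp only [smul_neg]
  have heX : (inner ℂ e x : ℂ) = ((np : ℝ) : ℂ) := by
    simp only [he, hxp, inner_smul_left, inner_add_left, Complex.conj_ofReal,
      map_inv₀, map_ofNat, h0, hxx]
    rw [show (‖x‖^2 : ℝ) = 2 * np^2 by rw [hnp]; ring]
    push_cast
    field_simp
    ring
  have hfX : (inner ℂ f x : ℂ) = ((nm : ℝ) : ℂ) := by
    simp only [hf, hxm, inner_smul_left, inner_sub_left, Complex.conj_ofReal,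
      map_inv₀, map_ofNat, h0, hxx]
    rw [show (‖x‖^2 : ℝ) = 2 * nm^2 by rw [hnm]; ring]
    push_cast
    field_simp
    ring
  clear_value np nm
  clear hnpdef hnmdef
  clear_value e f
  clear he hf hxp hxm hp hm hpm hmp h0 h0' hJJ hxx
  clear_value xp xm
  clear xp xm
  set L := a^2 / ‖x‖^2 with hLdef
  have hL : 0 < L := by positivity
  set c := (L + L⁻¹)/2 with hcdef
  set s := (L - L⁻¹)/2 with hsdef
  have hc0 : 0 < c := by rw [hcdef]; positivity
  have hcs : c^2 - s^2 = 1 := by rw [hcdef, hsdef]; field_simp; ring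
  have h2 : c + s = L := by rw [hcdef, hsdef]; ring
  have h3 : L * ‖x‖^2 = a^2 := by rw [hLdef]; field_simp
  clear_value L c s
  clear hLdef hcdef hsdef
  refine ⟨symmAux J₀ e f c s,
    ⟨symmAux_inv J₀ e f c s hinv hsa hee hff hef hfe hJe hJf hcs,
     symmAux_symm J₀ e f c s hinv hsa hJe hJf,
     symmAux_pos J₀ e f c s hinv hsa hee hff hef hfe hJe hJf hc0 hcs⟩, ?_⟩
  rw [jnorm, symmAux_kform J₀ e f c s hinv hsa hJe hJf x, heX, hfX]
  have hre : (((starRingEnd ℂ) (((np : ℝ) : ℂ)) * ((nm : ℝ) : ℂ)).re) = np * nm := by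
    rw [Complex.conj_ofReal, ← Complex.ofReal_mul, Complex.ofReal_re]
  have hnorm1 : ‖((np : ℝ) : ℂ)‖^2 = np^2 := by
    rw [Complex.norm_real, Real.norm_eq_abs, sq_abs]
  have hnorm2 : ‖((nm : ℝ) : ℂ)‖^2 = nm^2 := by
    rw [Complex.norm_real, Real.norm_eq_abs, sq_abs]
  rw [Complex.ofReal_re, hre, hnorm1, hnorm2]
  have hEa : ‖x‖^2 + (c - 1) * (np^2 + nm^2) + s * (2 * (np * nm)) = a^2 := by
    have h1 : np * nm = ‖x‖^2/2 := by rw [hnpm, ← hnm]; ring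
    linear_combination (c-1) * hnp + (c-1) * hnm + 2*s*h1 + ‖x‖^2 * h2 + h3
  rw [hEa, Real.sqrt_sq ha.le]
end

section
/- Assume the form [·,·] is indefinite. Let x ∈ H with x ≠ 0 and [x, x] ≠ 0, and let J be a given fundamental symmetry of (H, [·,·]). Then there exists a fundamental symmetry K such that ‖x‖_J < ‖x‖_K. -/
open scoped ComplexOrder

open scoped ComplexConjugate

section Aux

variable {H : Type*} [NormedAddCommGroup H] [InnerProductSpace ℂ H]

lemma kform_conj (J₀ : H →L[ℂ] H)
    (hsa : ∀ x y : H, (inner ℂ (J₀ x) y : ℂ) = inner ℂ x (J₀ y)) (u v : H) :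
    conj (kform J₀ u v) = kform J₀ v u := by
  rw [kform, kform, inner_conj_symm, hsa]

lemma kform_add_right (J₀ : H →L[ℂ] H) (u v w : H) :
    kform J₀ u (v + w) = kform J₀ u v + kform J₀ u w := by
  simp [kform, inner_add_right]

lemma kform_smul_right (J₀ : H →L[ℂ] H) (c : ℂ) (u v : H) :
    kform J₀ u (c • v) = c * kform J₀ u v := by
  simp [kform, inner_smul_right]

lemma kform_add_left (J₀ : H →L[ℂ] H) (u v w : H) :
    kform J₀ (u + v) w = kform J₀ u w + kform J₀ v w := by
  simp [kform, inner_add_left]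

lemma kform_smul_left (J₀ : H →L[ℂ] H) (c : ℂ) (u w : H) :
    kform J₀ (c • u) w = conj c * kform J₀ u w := by
  simp [kform, inner_smul_left, mul_comm]

lemma kform_neg_left (J₀ : H →L[ℂ] H) (u w : H) :
    kform J₀ (-u) w = -kform J₀ u w := by
  simp [kform, inner_neg_left]

lemma kform_neg_right (J₀ : H →L[ℂ] H) (u v : H) :
    kform J₀ u (-v) = -kform J₀ u v := by
  simp [kform, inner_neg_right]

/-- The auxiliary positive form `g u v = [J u, v]` as a pre-inner-product core. -/
noncomputable def kreinCore (J₀ J : H →L[ℂ] H)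
    (hsa : ∀ x y : H, (inner ℂ (J₀ x) y : ℂ) = inner ℂ x (J₀ y))
    (hJ : IsFundamentalSymmetry J₀ J) : PreInnerProductSpace.Core ℂ H where
  inner u v := kform J₀ (J u) v
  conj_inner_symm u v := by
    show conj (kform J₀ (J v) u) = kform J₀ (J u) v
    rw [kform_conj J₀ hsa, ← hJ.2.1]
  re_inner_nonneg u := by
    rcases eq_or_ne u 0 with h | h
    · simp [h, kform]
    · exact le_of_lt ((Complex.lt_def.mp (hJ.2.2 u h)).1)
  add_left u v w := by
    simp [kform, inner_add_left]
  smul_left u v c := by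
    simp [kform, inner_smul_left, mul_comm]

lemma krein_cs (J₀ J : H →L[ℂ] H)
    (hsa : ∀ x y : H, (inner ℂ (J₀ x) y : ℂ) = inner ℂ x (J₀ y))
    (hJ : IsFundamentalSymmetry J₀ J) (u v : H) :
    ‖kform J₀ (J u) v‖ ^ 2 ≤ (kform J₀ (J u) u).re * (kform J₀ (J v) v).re := by
  have h := @InnerProductSpace.Core.inner_mul_inner_self_le ℂ H _ _ _
      (kreinCore J₀ J hsa hJ) u v
  have hsymm : ‖(kform J₀ (J v) u)‖ = ‖kform J₀ (J u) v‖ := by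
    rw [hJ.2.1 v u, ← kform_conj J₀ hsa (J u) v, RCLike.norm_conj]
  calc ‖kform J₀ (J u) v‖ ^ 2 = ‖kform J₀ (J u) v‖ * ‖kform J₀ (J v) u‖ := by
        rw [hsymm]; ring
    _ ≤ _ := h

lemma main_aux (J₀ J : H →L[ℂ] H)
    (hsa : ∀ x y : H, (inner ℂ (J₀ x) y : ℂ) = inner ℂ x (J₀ y))
    (hJ : IsFundamentalSymmetry J₀ J)
    (x : H) (hx0 : x ≠ 0)
    (ep em : H)
    (hep : J ep = ep) (hem : J em = -em)
    (hpp : kform J₀ ep ep = 1) (hmm : kform J₀ em em = -1)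
    (hpm : kform J₀ ep em = 0)
    (hne : kform J₀ ep x ≠ 0 ∨ kform J₀ em x ≠ 0)
    (hre : 0 ≤ (conj (kform J₀ ep x) * kform J₀ em x).re) :
    ∃ K : H →L[ℂ] H, IsFundamentalSymmetry J₀ K ∧ jnorm J₀ J x < jnorm J₀ K x := by
  obtain ⟨hJJ, hJsa, hJpos⟩ := hJ
  have hJ' : IsFundamentalSymmetry J₀ J := ⟨hJJ, hJsa, hJpos⟩
  set K : H →L[ℂ] H := J
      + (((1/24 : ℂ) • innerSL ℂ (J₀ ep) + (7/24 : ℂ) • innerSL ℂ (J₀ em)).smulRight ep)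
      + (((7/24 : ℂ) • innerSL ℂ (J₀ ep) + (1/24 : ℂ) • innerSL ℂ (J₀ em)).smulRight em)
      with hKdef
  have hmp : kform J₀ em ep = 0 := by
    rw [← kform_conj J₀ hsa ep em, hpm, map_zero]
  have hK : ∀ u, K u = J u + ((1/24) * kform J₀ ep u + (7/24) * kform J₀ em u) • ep
      + ((7/24) * kform J₀ ep u + (1/24) * kform J₀ em u) • em := by
    intro u
    simp [hKdef, kform, ContinuousLinearMap.smulRight_apply, ContinuousLinearMap.add_apply,
      ContinuousLinearMap.smul_apply, innerSL_apply_apply, add_smul, smul_smul]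
  have hAJ : ∀ u, kform J₀ ep (J u) = kform J₀ ep u := by
    intro u; rw [← hJsa ep u, hep]
  have hBJ : ∀ u, kform J₀ em (J u) = -kform J₀ em u := by
    intro u; rw [← hJsa em u, hem, kform_neg_left]
  -- values of the two functionals on K u
  have hAK : ∀ u, kform J₀ ep (K u)
      = kform J₀ ep u + ((1/24) * kform J₀ ep u + (7/24) * kform J₀ em u) := by
    intro u
    rw [hK u, kform_add_right, kform_add_right, kform_smul_right, kform_smul_right,
      hpp, hpm, hAJ]
    ring
  have hBK : ∀ u, kform J₀ em (K u)
      = -kform J₀ em u - ((7/24) * kform J₀ ep u + (1/24) * kform J₀ em u) := by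
    intro u
    rw [hK u, kform_add_right, kform_add_right, kform_smul_right, kform_smul_right,
      hmp, hmm, hBJ]
    ring
  -- K is an involution
  have hKK : ∀ u, K (K u) = u := by
    intro u
    rw [hK (K u), hAK, hBK, hK u, map_add, map_add, map_smul, map_smul, hep, hem, hJJ]
    set a := kform J₀ ep u
    set b := kform J₀ em u
    match_scalars <;> ring
  -- K is kform-selfadjoint
  have hKsa : ∀ u v, kform J₀ (K u) v = kform J₀ u (K v) := by
    intro u v
    rw [hK u, hK v, kform_add_left, kform_add_left, kform_smul_left, kform_smul_left,
      kform_add_right, kform_add_right, kform_smul_right, kform_smul_right, hJsa u v,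
      ← kform_conj J₀ hsa ep u, ← kform_conj J₀ hsa em u]
    set a := kform J₀ ep u
    set b := kform J₀ em u
    set a' := kform J₀ ep v
    set b' := kform J₀ em v
    simp only [map_add, map_mul, map_div₀, map_one, map_ofNat]
    ring
  -- the quadratic form of K
  have hKuu : ∀ u, kform J₀ (K u) u = kform J₀ (J u) u
      + (((1/24) * (Complex.normSq (kform J₀ ep u) + Complex.normSq (kform J₀ em u))
        + (7/12) * ((conj (kform J₀ ep u) * kform J₀ em u).re) : ℝ) : ℂ) := by
    intro u
    rw [hK u, kform_add_left, kform_add_left, kform_smul_left, kform_smul_left]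
    set a := kform J₀ ep u with ha
    set b := kform J₀ em u with hb
    have h1 : conj a * a = (Complex.normSq a : ℂ) := by
      rw [Complex.normSq_eq_conj_mul_self]
    have h2 : conj b * b = (Complex.normSq b : ℂ) := by
      rw [Complex.normSq_eq_conj_mul_self]
    have h3 : conj b * a + conj a * b = 2 * (((conj a * b).re : ℝ) : ℂ) := by
      have h4 := Complex.add_conj (conj a * b)
      rw [map_mul, Complex.conj_conj] at h4
      push_cast at h4 ⊢
      linear_combination h4
    have hconja : conj ((1/24 : ℂ) * a + (7/24) * b)
        = (1/24) * conj a + (7/24) * conj b := by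
      simp only [map_add, map_mul, map_div₀, map_one, map_ofNat]
    have hconjb : conj ((7/24 : ℂ) * a + (1/24) * b)
        = (7/24) * conj a + (1/24) * conj b := by
      simp only [map_add, map_mul, map_div₀, map_one, map_ofNat]
    rw [hconja, hconjb]
    push_cast
    linear_combination (1/24 : ℂ) * h1 + (1/24 : ℂ) * h2 + (7/24 : ℂ) * h3
  -- Cauchy–Schwarz bounds
  have hcs : ∀ u, Complex.normSq (kform J₀ ep u) + Complex.normSq (kform J₀ em u)
      ≤ 2 * (kform J₀ (J u) u).re := by
    intro u
    have h1 := krein_cs J₀ J hsa hJ' ep u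
    have h2 := krein_cs J₀ J hsa hJ' em u
    rw [hep, hpp] at h1
    rw [hem, kform_neg_left, kform_neg_left, hmm] at h2
    simp only [norm_neg, neg_neg] at h1 h2
    have e1 : Complex.normSq (kform J₀ ep u) = ‖kform J₀ ep u‖ ^ 2 := by
      rw [Complex.normSq_eq_norm_sq]
    have e2 : Complex.normSq (kform J₀ em u) = ‖kform J₀ em u‖ ^ 2 := by
      rw [Complex.normSq_eq_norm_sq]
    simp only [Complex.one_re, Complex.neg_re, one_mul] at h1 h2
    rw [e1, e2]
    linarith
  -- positivity of K's quadratic form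
  have hKpos : ∀ u, u ≠ 0 → 0 < kform J₀ (K u) u := by
    intro u hu
    have hg := Complex.lt_def.mp (hJpos u hu)
    simp only [Complex.zero_re, Complex.zero_im] at hg
    rw [hKuu u, Complex.lt_def]
    have hcsu := hcs u
    set a := kform J₀ ep u
    set b := kform J₀ em u
    have hab : |(conj a * b).re| ≤ (Complex.normSq a + Complex.normSq b) / 2 := by
      have h5 : |(conj a * b).re| ≤ ‖conj a * b‖ := Complex.abs_re_le_norm _
      have h6 : ‖conj a * b‖ = ‖a‖ * ‖b‖ := by
        rw [norm_mul, RCLike.norm_conj]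
      have h7 : Complex.normSq a = ‖a‖ ^ 2 := by
        rw [Complex.normSq_eq_norm_sq]
      have h8 : Complex.normSq b = ‖b‖ ^ 2 := by
        rw [Complex.normSq_eq_norm_sq]
      nlinarith [sq_nonneg (‖a‖ - ‖b‖), norm_nonneg (conj a * b)]
    obtain ⟨hab1, hab2⟩ := abs_le.mp hab
    constructor
    · simp only [Complex.zero_re, Complex.add_re, Complex.ofReal_re]
      linarith
    · simp only [Complex.zero_im, Complex.add_im, Complex.ofReal_im, add_zero]
      exact hg.2
  refine ⟨K, ⟨hKK, hKsa, hKpos⟩, ?_⟩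
  -- norm comparison at x
  have hgx := Complex.lt_def.mp (hJpos x hx0)
  simp only [Complex.zero_re, Complex.zero_im] at hgx
  have hpos : 0 < Complex.normSq (kform J₀ ep x) + Complex.normSq (kform J₀ em x) := by
    rcases hne with h | h
    · have := Complex.normSq_pos.mpr h
      have := Complex.normSq_nonneg (kform J₀ em x)
      linarith
    · have := Complex.normSq_pos.mpr h
      have := Complex.normSq_nonneg (kform J₀ ep x)
      linarith
  rw [jnorm, jnorm, hKuu x]
  apply Real.sqrt_lt_sqrt (le_of_lt hgx.1)
  simp only [Complex.add_re, Complex.ofReal_re]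
  nlinarith


lemma norm_one_phase (z : ℂ) :
    ∃ lam : ℂ, ‖lam‖ = 1 ∧ 0 ≤ (conj lam * z).re := by
  rcases eq_or_ne z 0 with h | h
  · exact ⟨1, by simp, by simp [h]⟩
  · have hz : (0:ℝ) < ‖z‖ := norm_pos_iff.mpr h
    refine ⟨(‖z‖ : ℂ)⁻¹ * z, ?_, ?_⟩
    · rw [norm_mul, norm_inv, Complex.norm_real, Real.norm_eq_abs, abs_of_pos hz,
        inv_mul_cancel₀ hz.ne']
    · have hzz : conj z * z = ((‖z‖ ^ 2 : ℝ) : ℂ) := by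
        rw [Complex.normSq_eq_conj_mul_self.symm, Complex.normSq_eq_norm_sq]
      have h9 : conj ((‖z‖ : ℂ)⁻¹ * z) * z = ((‖z‖ : ℝ) : ℂ) := by
        rw [map_mul, map_inv₀, Complex.conj_ofReal, mul_assoc, hzz]
        rw [show ((‖z‖ ^ 2 : ℝ) : ℂ) = (‖z‖ : ℂ) * (‖z‖ : ℂ) by push_cast; ring]
        rw [← mul_assoc, inv_mul_cancel₀ (by exact_mod_cast hz.ne' : (‖z‖:ℂ) ≠ 0), one_mul]
      rw [h9]
      simp [hz.le]


end Aux

theorem exists_fundamentalSymmetry_jnorm_lt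
    {H : Type*} [NormedAddCommGroup H] [InnerProductSpace ℂ H] [CompleteSpace H]
    (J₀ : H →L[ℂ] H)
    (hinv : ∀ x, J₀ (J₀ x) = x)
    (hsa : ∀ x y : H, (inner ℂ (J₀ x) y : ℂ) = inner ℂ x (J₀ y))
    (hindef : ∃ u v : H, 0 < kform J₀ u u ∧ kform J₀ v v < 0)
    (x : H) (hx0 : x ≠ 0) (hx : kform J₀ x x ≠ 0)
    (J : H →L[ℂ] H) (hJ : IsFundamentalSymmetry J₀ J) :
    ∃ K : H →L[ℂ] H, IsFundamentalSymmetry J₀ K ∧ jnorm J₀ J x < jnorm J₀ K x := by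
  obtain ⟨hJJ, hJsa, hJpos⟩ := hJ
  have hJ' : IsFundamentalSymmetry J₀ J := ⟨hJJ, hJsa, hJpos⟩
  obtain ⟨u, v, hu, hv⟩ := hindef
  have hu0 : u ≠ 0 := by
    intro h; rw [h] at hu; simp [kform] at hu
  have hv0 : v ≠ 0 := by
    intro h; rw [h] at hv; simp [kform] at hv
  -- a nonzero positive eigenvector and a nonzero negative eigenvector exist
  have hp0 : u + J u ≠ 0 := by
    intro h
    have hJu : J u = -u := by
      have := eq_neg_of_add_eq_zero_right h; rw [this]
    have h2 := hJpos u hu0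
    rw [hJu, kform_neg_left] at h2
    have : kform J₀ u u < 0 := neg_pos.mp h2
    exact lt_asymm hu this
  have hJp0 : J (u + J u) = u + J u := by
    rw [map_add, hJJ]; abel
  have hn0 : v - J v ≠ 0 := by
    intro h
    have hJv : J v = v := by
      have := sub_eq_zero.mp h; rw [← this]
    have h2 := hJpos v hv0
    rw [hJv] at h2
    exact lt_asymm h2 hv
  have hJn0 : J (v - J v) = -(v - J v) := by
    rw [map_sub, hJJ]; abel
  -- choose p (positive eigenvector) and n (negative eigenvector) with
  -- [p,x] ≠ 0 or [n,x] ≠ 0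
  obtain ⟨p, n, hJp, hpne, hJn, hnne, hkey⟩ :
      ∃ p n : H, J p = p ∧ p ≠ 0 ∧ J n = -n ∧ n ≠ 0 ∧
        (kform J₀ p x ≠ 0 ∨ kform J₀ n x ≠ 0) := by
    by_cases hxc : x + J x = 0
    · refine ⟨u + J u, x, hJp0, hp0, ?_, hx0, Or.inr hx⟩
      have : J x = -x := by
        have := eq_neg_of_add_eq_zero_right hxc; rw [this]
      exact this
    · refine ⟨x + J x, v - J v, ?_, hxc, hJn0, hn0, Or.inl ?_⟩
      · rw [map_add, hJJ]; abel
      · -- [x + Jx, x] = [x+Jx, x+Jx]/2 ≠ 0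
        have hJs : J (x + J x) = x + J x := by rw [map_add, hJJ]; abel
        have hJd : J (x - J x) = -(x - J x) := by rw [map_sub, hJJ]; abel
        have horth : kform J₀ (x + J x) (x - J x) = 0 := by
          have h1 : kform J₀ (x + J x) (x - J x)
              = -kform J₀ (x + J x) (x - J x) := by
            conv_lhs => rw [← hJs, hJsa, hJd]
            rw [kform_neg_right]
          have h2 : (2 : ℂ) * kform J₀ (x + J x) (x - J x) = 0 := by
            linear_combination h1
          have := mul_eq_zero.mp h2
          simpa using this
        have hkp : 2 * kform J₀ (x + J x) x = kform J₀ (x + J x) (x + J x) := by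
          calc 2 * kform J₀ (x + J x) x
              = kform J₀ (x + J x) ((2 : ℂ) • x) := by rw [kform_smul_right]
            _ = kform J₀ (x + J x) ((x + J x) + (x - J x)) := by
                congr 1; module
            _ = kform J₀ (x + J x) (x + J x) := by
                rw [kform_add_right, horth, add_zero]
        have hss : kform J₀ (x + J x) (x + J x) ≠ 0 := by
          have := hJpos (x + J x) hxc
          rw [hJs] at this
          exact ne_of_gt this
        intro h0
        rw [h0, mul_zero] at hkp
        exact hss hkp.symm
  -- normalize p
  have hpp' : 0 < kform J₀ p p := by
    have := hJpos p hpne; rwa [hJp] at this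
  have hppl := Complex.lt_def.mp hpp'
  simp only [Complex.zero_re, Complex.zero_im] at hppl
  set rp := (kform J₀ p p).re with hrp
  have hrppos : 0 < rp := hppl.1
  have hppr : kform J₀ p p = (rp : ℂ) := by
    apply Complex.ext <;> simp [hrp, ← hppl.2]
  set cp : ℂ := (((Real.sqrt rp)⁻¹ : ℝ) : ℂ) with hcp
  have hcp0 : cp ≠ 0 := by
    have : Real.sqrt rp ≠ 0 := by positivity
    simp [hcp, this]
  set ep := cp • p with hepdef
  have hJep : J ep = ep := by rw [hepdef, map_smul, hJp]
  have hepep : kform J₀ ep ep = 1 := by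
    rw [hepdef, kform_smul_left, kform_smul_right, hppr, hcp, Complex.conj_ofReal]
    have h : ((Real.sqrt rp)⁻¹) * (((Real.sqrt rp)⁻¹) * rp) = 1 := by
      have hs : Real.sqrt rp * Real.sqrt rp = rp := Real.mul_self_sqrt hrppos.le
      have hs0 : Real.sqrt rp ≠ 0 := by positivity
      field_simp
      rw [sq, hs]
    exact_mod_cast h
  -- normalize n
  have hnn' : 0 < kform J₀ (J n) n := hJpos n hnne
  have hnnneg : kform J₀ n n = -kform J₀ (J n) n := by
    rw [hJn, kform_neg_left, neg_neg]
  have hnnl := Complex.lt_def.mp hnn'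
  simp only [Complex.zero_re, Complex.zero_im] at hnnl
  set rn := (kform J₀ (J n) n).re with hrn
  have hrnpos : 0 < rn := hnnl.1
  have hnnr : kform J₀ n n = -(rn : ℂ) := by
    rw [hnnneg]
    congr 1
    apply Complex.ext <;> simp [hrn, ← hnnl.2]
  set cn : ℂ := (((Real.sqrt rn)⁻¹ : ℝ) : ℂ) with hcn
  have hcn0 : cn ≠ 0 := by
    have : Real.sqrt rn ≠ 0 := by positivity
    simp [hcn, this]
  set n' := cn • n with hn'def
  have hn'n' : kform J₀ n' n' = -1 := by
    rw [hn'def, kform_smul_left, kform_smul_right, hnnr, hcn, Complex.conj_ofReal]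
    have h : ((Real.sqrt rn)⁻¹) * (((Real.sqrt rn)⁻¹) * rn) = 1 := by
      have hs : Real.sqrt rn * Real.sqrt rn = rn := Real.mul_self_sqrt hrnpos.le
      have hs0 : Real.sqrt rn ≠ 0 := by positivity
      field_simp
      rw [sq, hs]
    have h2 : ((((Real.sqrt rn)⁻¹ : ℝ)) : ℂ) * (((((Real.sqrt rn)⁻¹ : ℝ)) : ℂ) * ((rn : ℝ) : ℂ)) = 1 := by
      exact_mod_cast h
    rw [mul_neg, mul_neg, h2]
  -- choose the phase
  obtain ⟨lam, hlam1, hlamre⟩ :=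
    norm_one_phase (conj (kform J₀ ep x) * kform J₀ n' x)
  have hlam0 : lam ≠ 0 := by
    intro h; rw [h] at hlam1; simp at hlam1
  set em := lam • n' with hemdef
  have hJem : J em = -em := by
    rw [hemdef, hn'def, map_smul, map_smul, hJn]
    simp [smul_neg]
  have hemem : kform J₀ em em = -1 := by
    rw [hemdef, kform_smul_left, kform_smul_right, hn'n']
    have : conj lam * lam = ((‖lam‖ ^ 2 : ℝ) : ℂ) := by
      rw [Complex.normSq_eq_conj_mul_self.symm, Complex.normSq_eq_norm_sq]
    rw [mul_neg, mul_neg, ← mul_assoc, this, hlam1]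
    norm_num
  have hepem : kform J₀ ep em = 0 := by
    have hpn : kform J₀ p n = 0 := by
      have h1 : kform J₀ p n = -kform J₀ p n := by
        conv_lhs => rw [← hJp, hJsa, hJn, kform_neg_right]
      have h2 : (2 : ℂ) * kform J₀ p n = 0 := by linear_combination h1
      simpa using mul_eq_zero.mp h2
    rw [hepdef, hemdef, hn'def, kform_smul_left, kform_smul_right, kform_smul_right, hpn]
    ring
  -- the two functionals at x
  have hconjne : ∀ c : ℂ, c ≠ 0 → conj c ≠ 0 := by
    intro c hc h0
    apply hc
    have := congrArg conj h0
    simpa using this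
  have hepx : kform J₀ ep x = conj cp * kform J₀ p x := by
    rw [hepdef, kform_smul_left]
  have hn'x : kform J₀ n' x = conj cn * kform J₀ n x := by
    rw [hn'def, kform_smul_left]
  have hBx : kform J₀ em x = conj lam * kform J₀ n' x := by
    rw [hemdef, kform_smul_left]
  have hne : kform J₀ ep x ≠ 0 ∨ kform J₀ em x ≠ 0 := by
    rcases hkey with h | h
    · left
      rw [hepx]
      exact mul_ne_zero (hconjne cp hcp0) h
    · right
      rw [hBx, hn'x]
      exact mul_ne_zero (hconjne lam hlam0)
        (mul_ne_zero (hconjne cn hcn0) h)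
  have hre : 0 ≤ (conj (kform J₀ ep x) * kform J₀ em x).re := by
    rw [hBx, show conj (kform J₀ ep x) * (conj lam * kform J₀ n' x)
      = conj lam * (conj (kform J₀ ep x) * kform J₀ n' x) from by ring]
    exact hlamre
  exact main_aux J₀ J hsa hJ' x hx0 ep em hJep hJem hepep hemem hepem hne hre
end

section
/- Let x ∈ H with x ≠ 0 and [x, x] = 0 (a nonzero neutral element), and let J be a given fundamental symmetry of (H, [·,·]). Then there exist fundamental symmetries K₁ and K₂ such that ‖x‖_{K₁} < ‖x‖_J < ‖x‖_{K₂}. -/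
open scoped ComplexOrder

open ComplexConjugate in
set_option maxHeartbeats 1000000 in
/-- Key construction: a "hyperbolic rotation" of a fundamental symmetry in the plane
spanned by a `J`-positive vector `u` and a `J`-negative vector `v` of equal size. -/
lemma krein_key {H : Type*} [NormedAddCommGroup H] [InnerProductSpace ℂ H]
    (J₀ : H →L[ℂ] H)
    (hsa : ∀ x y : H, (inner ℂ (J₀ x) y : ℂ) = inner ℂ x (J₀ y))
    (J : H →L[ℂ] H) (hJ : IsFundamentalSymmetry J₀ J)
    (u v : H) (hu : J u = u) (hv : J v = -v)
    (Ar : ℝ) (hAr : 0 < Ar)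
    (huu : (inner ℂ (J₀ u) u : ℂ) = (Ar : ℂ))
    (hvv : (inner ℂ (J₀ v) v : ℂ) = -(Ar : ℂ))
    (huv : (inner ℂ (J₀ u) v : ℂ) = 0)
    (C S : ℝ) (hC : 0 < C) (hCS : C ^ 2 = 1 + S ^ 2) :
    ∃ K : H →L[ℂ] H, IsFundamentalSymmetry J₀ K ∧
      kform J₀ (K (u + v)) (u + v) = ((2 * Ar * (C - S) : ℝ) : ℂ) := by
  have hconj : ∀ a b : H, conj (inner ℂ (J₀ a) b : ℂ) = inner ℂ (J₀ b) a := by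
    intro a b
    rw [inner_conj_symm, hsa b a]
  have hJsym : ∀ a b : H, (inner ℂ (J₀ (J a)) b : ℂ) = inner ℂ (J₀ a) (J b) := hJ.2.1
  have hvu : (inner ℂ (J₀ v) u : ℂ) = 0 := by rw [← hconj u v, huv, map_zero]
  have h1 : ∀ z : H, (inner ℂ (J₀ u) (J z) : ℂ) = inner ℂ (J₀ u) z := by
    intro z; rw [← hJsym, hu]
  have h2 : ∀ z : H, (inner ℂ (J₀ v) (J z) : ℂ) = -inner ℂ (J₀ v) z := by
    intro z; rw [← hJsym, hv, map_neg, inner_neg_left]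
  have hJg : ∀ z : H, (inner ℂ (J₀ (J z)) u : ℂ) = inner ℂ (J₀ z) u := by
    intro z; rw [← hconj u (J z), h1, hconj]
  have hJh : ∀ z : H, (inner ℂ (J₀ (J z)) v : ℂ) = -inner ℂ (J₀ z) v := by
    intro z; rw [← hconj v (J z), h2, map_neg, hconj]
  have hswapu : ∀ a : H, (inner ℂ (J₀ a) u : ℂ) = conj (inner ℂ (J₀ u) a : ℂ) := by
    intro a; rw [hconj]
  have hswapv : ∀ a : H, (inner ℂ (J₀ a) v : ℂ) = conj (inner ℂ (J₀ v) a : ℂ) := by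
    intro a; rw [hconj]
  set c₁ : ℝ := (C - 1) / Ar with hc₁def
  set c₂ : ℝ := S / Ar with hc₂def
  have hAr' : Ar ≠ 0 := ne_of_gt hAr
  have hc : 2 * c₁ + Ar * (c₁ ^ 2 - c₂ ^ 2) = 0 := by
    rw [hc₁def, hc₂def]; field_simp; nlinarith [hCS]
  have hcC : 2 * (c₁ : ℂ) + (Ar : ℂ) * ((c₁ : ℂ) ^ 2 - (c₂ : ℂ) ^ 2) = 0 := by
    exact_mod_cast congrArg (Complex.ofReal) hc
  set K : H →L[ℂ] H := J + (innerSL ℂ (J₀ u)).smulRight ((c₁ : ℂ) • u + (c₂ : ℂ) • v)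
      + (innerSL ℂ (J₀ v)).smulRight ((c₂ : ℂ) • u + (c₁ : ℂ) • v) with hKdef
  have hKapp : ∀ y : H, K y = J y
      + ((c₁ : ℂ) * inner ℂ (J₀ u) y + (c₂ : ℂ) * inner ℂ (J₀ v) y) • u
      + ((c₂ : ℂ) * inner ℂ (J₀ u) y + (c₁ : ℂ) * inner ℂ (J₀ v) y) • v := by
    intro y
    simp only [hKdef, ContinuousLinearMap.add_apply, ContinuousLinearMap.smulRight_apply,
      innerSL_apply_apply]
    module
  -- K is an involution
  have hKK : ∀ y, K (K y) = y := by
    intro y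
    rw [hKapp (K y), hKapp y]
    simp only [map_add, map_smul, inner_add_right, inner_smul_right, hJ.1, hu, hv,
      h1, h2, huu, huv, hvv, hvu, smul_neg, inner_neg_right]
    match_scalars
    · ring
    · linear_combination (inner ℂ (J₀ u) y : ℂ) * hcC
    · linear_combination (-(inner ℂ (J₀ v) y : ℂ)) * hcC
  -- K is kform-selfadjoint
  have hKsym : ∀ y z, kform J₀ (K y) z = kform J₀ y (K z) := by
    intro y z
    show (inner ℂ (J₀ (K y)) z : ℂ) = inner ℂ (J₀ y) (K z)
    rw [hKapp y, hKapp z]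
    simp only [map_add, map_smul, inner_add_left, inner_smul_left, inner_add_right,
      inner_smul_right, hJsym y z, h1, h2, hJg, hJh, hswapu, hswapv, huu, huv, hvv, hvu,
      map_mul, Complex.conj_ofReal, map_neg, Complex.conj_conj]
    ring
  -- K is positive
  have hKpos : ∀ y, y ≠ 0 → 0 < kform J₀ (K y) y := by
    intro y hy
    show (0 : ℂ) < inner ℂ (J₀ (K y)) y
    set g : ℂ := inner ℂ (J₀ u) y with hg
    set h : ℂ := inner ℂ (J₀ v) y with hh
    set Pc : ℂ := inner ℂ (J₀ (J y)) y with hPcdef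
    have hPc : (0 : ℂ) < Pc := hJ.2.2 y hy
    clear_value g h Pc
    rw [Complex.lt_def] at hPc
    simp only [Complex.zero_re, Complex.zero_im] at hPc
    obtain ⟨hPre, hPim⟩ := hPc
    have hPceq : Pc = ((Pc.re : ℝ) : ℂ) := by
      apply Complex.ext <;> simp [← hPim]
    set Nr : ℝ := Complex.normSq g + Complex.normSq h with hNr
    set t : ℝ := 2 * ((conj g) * h).re with ht
    clear_value Nr t
    have hmc : (conj g * g + conj h * h : ℂ) = (Nr : ℂ) := by
      rw [mul_comm (conj g), mul_comm (conj h), Complex.mul_conj, Complex.mul_conj, hNr]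
      push_cast; ring
    have hmt : (conj g * h + conj h * g : ℂ) = (t : ℂ) := by
      have e1 : conj h * g = conj (conj g * h) := by
        rw [map_mul, Complex.conj_conj]; ring
      rw [e1, Complex.add_conj, ht]
    -- value formula
    have hval : (inner ℂ (J₀ (K y)) y : ℂ)
        = ((Pc.re + c₁ * Nr + c₂ * t : ℝ) : ℂ) := by
      rw [hKapp y]
      simp only [map_add, map_smul, inner_add_left, inner_smul_left, map_mul,
        Complex.conj_ofReal, ← hg, ← hh, ← hPcdef]
      push_cast
      linear_combination hPceq + (c₁ : ℂ) * hmc + (c₂ : ℂ) * hmt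
    have hyu : (inner ℂ (J₀ y) u : ℂ) = conj g := by rw [hswapu y, hg]
    have hyv : (inner ℂ (J₀ y) v : ℂ) = conj h := by rw [hswapv y, hh]
    -- Bessel inequality
    set w : H := y - ((Ar : ℂ)⁻¹ * g) • u + ((Ar : ℂ)⁻¹ * h) • v with hw
    clear_value w
    have hwval : (inner ℂ (J₀ (J w)) w : ℂ) = ((Pc.re - Ar⁻¹ * Nr : ℝ) : ℂ) := by
      rw [hw]
      simp only [map_add, map_sub, map_smul, map_neg, hu, hv, inner_add_left, inner_sub_left,
        inner_smul_left, inner_add_right, inner_sub_right, inner_smul_right,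
        h1, h2, hJg, hJh, hyu, hyv, huu, huv, hvv, hvu, smul_neg,
        inner_neg_right, inner_neg_left, map_mul, map_inv₀, Complex.conj_ofReal,
        Complex.conj_conj, ← hg, ← hh, ← hPcdef]
      push_cast
      have hArC : (Ar : ℂ) * ((Ar : ℂ))⁻¹ = 1 := mul_inv_cancel₀ (by exact_mod_cast hAr.ne')
      linear_combination hPceq - ((Ar : ℂ))⁻¹ * hmc
        + (((Ar : ℂ))⁻¹ * (conj g * g + conj h * h)) * hArC
    have hbess : 0 ≤ Pc.re - Ar⁻¹ * Nr := by
      rcases eq_or_ne w 0 with h0 | h0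
      · have e0 : ((Pc.re - Ar⁻¹ * Nr : ℝ) : ℂ) = 0 := by
          rw [← hwval, h0]; simp
        have := Complex.ofReal_eq_zero.mp e0
        linarith
      · have h3 : (0 : ℂ) < ((Pc.re - Ar⁻¹ * Nr : ℝ) : ℂ) := by
          rw [← hwval]; exact hJ.2.2 w h0
        exact le_of_lt (Complex.zero_lt_real.mp h3)
    -- bound on t
    have hNnn : 0 ≤ Nr := by
      rw [hNr]
      exact add_nonneg (Complex.normSq_nonneg g) (Complex.normSq_nonneg h)
    have hz : |((conj g) * h).re| ≤ ‖g‖ * ‖h‖ := by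
      calc |((conj g) * h).re| ≤ ‖(conj g) * h‖ := Complex.abs_re_le_norm _
      _ = ‖g‖ * ‖h‖ := by rw [norm_mul, Complex.norm_conj]
    have hgh : 2 * (‖g‖ * ‖h‖) ≤ Nr := by
      have e1 := Complex.sq_norm g
      have e2 := Complex.sq_norm h
      rw [hNr]
      nlinarith [sq_nonneg (‖g‖ - ‖h‖)]
    have ht1 : t ≤ Nr := by
      have := (abs_le.mp hz).2; rw [ht]; linarith
    have ht2 : -Nr ≤ t := by
      have := (abs_le.mp hz).1; rw [ht]; linarith
    -- final real inequality
    rw [hval, Complex.zero_lt_real]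
    have hb' : Nr ≤ Ar * Pc.re := by
      have h4 : Ar⁻¹ * Nr ≤ Pc.re := by linarith
      calc Nr = Ar * (Ar⁻¹ * Nr) := by field_simp
      _ ≤ Ar * Pc.re := by nlinarith
    have hCabs : |S| < C := by
      nlinarith [sq_abs S, abs_nonneg S]
    have hmain : 0 < Ar * Pc.re + (C - 1) * Nr + S * t := by
      rcases eq_or_lt_of_le hNnn with hN0 | hNpos
      · have htz : t = 0 := by linarith
        have e : Ar * Pc.re + (C - 1) * Nr + S * t = Ar * Pc.re := by
          rw [← hN0, htz]; ring
        rw [e]; exact mul_pos hAr hPre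
      · have hkey : (C - |S|) * Nr ≤ C * Nr + S * t := by
          rcases le_or_gt 0 S with hS | hS
          · rw [abs_of_nonneg hS]; nlinarith
          · rw [abs_of_neg hS]; nlinarith
        nlinarith [mul_pos (sub_pos.mpr hCabs) hNpos]
    rw [hc₁def, hc₂def]
    have heq : Pc.re + (C - 1) / Ar * Nr + S / Ar * t
        = (Ar * Pc.re + (C - 1) * Nr + S * t) / Ar := by
      field_simp
    rw [heq]
    exact div_pos hmain hAr
  refine ⟨K, ⟨hKK, hKsym, hKpos⟩, ?_⟩
  -- the value of the new form at the neutral vector u + v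
  show (inner ℂ (J₀ (K (u + v))) (u + v) : ℂ) = _
  rw [hKapp]
  simp only [map_add, map_smul, map_neg, hu, hv, inner_add_left, inner_add_right,
    inner_smul_left, inner_smul_right, inner_neg_left, inner_neg_right, smul_neg,
    huu, huv, hvu, hvv, map_mul, Complex.conj_ofReal, map_zero,
    Complex.conj_conj, hc₁def, hc₂def]
  push_cast
  field_simp
  ring

theorem exists_fundamentalSymmetry_jnorm_lt_lt_of_neutral
    {H : Type*} [NormedAddCommGroup H] [InnerProductSpace ℂ H] [CompleteSpace H]
    (J₀ : H →L[ℂ] H)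
    (hinv : ∀ x, J₀ (J₀ x) = x)
    (hsa : ∀ x y : H, (inner ℂ (J₀ x) y : ℂ) = inner ℂ x (J₀ y))
    (x : H) (hx0 : x ≠ 0) (hx : kform J₀ x x = 0)
    (J : H →L[ℂ] H) (hJ : IsFundamentalSymmetry J₀ J) :
    ∃ K₁ K₂ : H →L[ℂ] H, IsFundamentalSymmetry J₀ K₁ ∧ IsFundamentalSymmetry J₀ K₂ ∧
      jnorm J₀ K₁ x < jnorm J₀ J x ∧ jnorm J₀ J x < jnorm J₀ K₂ x := by
  classical
  have hconj : ∀ a b : H, (starRingEnd ℂ) (inner ℂ (J₀ a) b : ℂ) = inner ℂ (J₀ b) a := by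
    intro a b
    rw [inner_conj_symm, hsa b a]
  set u : H := (2⁻¹ : ℂ) • (x + J x) with hudef
  set v : H := (2⁻¹ : ℂ) • (x - J x) with hvdef
  have hxuv : x = u + v := by rw [hudef, hvdef]; module
  have hu : J u = u := by
    rw [hudef, map_smul, map_add, hJ.1]; module
  have hv : J v = -v := by
    rw [hvdef, map_smul, map_sub, hJ.1]; module
  have h0 : (inner ℂ (J₀ (J u)) v : ℂ) = inner ℂ (J₀ u) (J v) := hJ.2.1 u v
  rw [hu, hv, inner_neg_right] at h0
  have huv : (inner ℂ (J₀ u) v : ℂ) = 0 := by linear_combination h0 / 2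
  have hvu : (inner ℂ (J₀ v) u : ℂ) = 0 := by rw [← hconj u v, huv, map_zero]
  have hsum : (inner ℂ (J₀ u) u : ℂ) + inner ℂ (J₀ v) v = 0 := by
    have hxx := hx
    rw [hxuv] at hxx
    simp only [kform, map_add, inner_add_left, inner_add_right, huv, hvu] at hxx
    linear_combination hxx
  have hu0 : u ≠ 0 := by
    intro h0u
    have hv0 : v ≠ 0 := by
      intro h1v; exact hx0 (by rw [hxuv, h0u, h1v, add_zero])
    have hpos := hJ.2.2 v hv0
    have huu0 : (inner ℂ (J₀ u) u : ℂ) = 0 := by rw [h0u]; simp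
    have hvv0 : (inner ℂ (J₀ v) v : ℂ) = 0 := by linear_combination hsum - huu0
    have hz : kform J₀ (J v) v = 0 := by
      show (inner ℂ (J₀ (J v)) v : ℂ) = 0
      rw [hv, map_neg, inner_neg_left, hvv0, neg_zero]
    rw [hz] at hpos
    exact lt_irrefl _ hpos
  have hApos := hJ.2.2 u hu0
  have hAeq : kform J₀ (J u) u = inner ℂ (J₀ u) u := by
    show (inner ℂ (J₀ (J u)) u : ℂ) = _; rw [hu]
  rw [hAeq, Complex.lt_def] at hApos
  simp only [Complex.zero_re, Complex.zero_im] at hApos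
  obtain ⟨hAre, hAim⟩ := hApos
  set Ar : ℝ := (inner ℂ (J₀ u) u : ℂ).re with hArdef
  have hArpos : 0 < Ar := hAre
  have huu : (inner ℂ (J₀ u) u : ℂ) = (Ar : ℂ) := by
    apply Complex.ext <;> simp [hArdef, ← hAim]
  have hvv : (inner ℂ (J₀ v) v : ℂ) = -(Ar : ℂ) := by linear_combination hsum - huu
  obtain ⟨K₁, hK₁, hK₁val⟩ := krein_key J₀ hsa J hJ u v hu hv Ar hArpos huu hvv huv
    (Real.cosh 1) (Real.sinh 1) (Real.cosh_pos 1) (Real.cosh_sq' 1)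
  obtain ⟨K₂, hK₂, hK₂val⟩ := krein_key J₀ hsa J hJ u v hu hv Ar hArpos huu hvv huv
    (Real.cosh 1) (-Real.sinh 1) (Real.cosh_pos 1) (by rw [neg_sq]; exact Real.cosh_sq' 1)
  have hJval : kform J₀ (J x) x = ((2 * Ar : ℝ) : ℂ) := by
    rw [hxuv]
    show (inner ℂ (J₀ (J (u + v))) (u + v) : ℂ) = _
    simp only [map_add, hu, hv, map_neg, inner_add_left, inner_add_right,
      inner_neg_left, huu, huv, hvu, hvv]
    push_cast; ring
  have h1 : kform J₀ (K₁ x) x = ((2 * Ar * (Real.cosh 1 - Real.sinh 1) : ℝ) : ℂ) := by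
    rw [hxuv]; exact hK₁val
  have h2 : kform J₀ (K₂ x) x = ((2 * Ar * (Real.cosh 1 - -Real.sinh 1) : ℝ) : ℂ) := by
    rw [hxuv]; exact hK₂val
  have hes : Real.cosh 1 - Real.sinh 1 < 1 := by
    rw [Real.cosh_sub_sinh]
    calc Real.exp (-1) < Real.exp 0 := Real.exp_lt_exp.mpr (by norm_num)
    _ = 1 := Real.exp_zero
  have hes' : (1 : ℝ) < Real.cosh 1 + Real.sinh 1 := by
    rw [Real.cosh_add_sinh]
    nlinarith [Real.add_one_le_exp (1 : ℝ)]
  have hespos : 0 < Real.cosh 1 - Real.sinh 1 := by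
    rw [Real.cosh_sub_sinh]; exact Real.exp_pos _
  refine ⟨K₁, K₂, hK₁, hK₂, ?_, ?_⟩
  · simp only [jnorm, h1, hJval, Complex.ofReal_re]
    apply Real.sqrt_lt_sqrt
    · positivity
    · nlinarith
  · simp only [jnorm, h2, hJval, Complex.ofReal_re]
    apply Real.sqrt_lt_sqrt
    · positivity
    · nlinarith
end

section
/- Let (x_n) be a sequence of nonzero neutral vectors in H (x_n ≠ 0 and [x_n, x_n] = 0 for all n). Then there exists a sequence (J_n) of fundamental symmetries of (H, [·,·]) such that ‖x_n‖_{J_n} → 0 as n → ∞. -/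
open scoped ComplexOrder

lemma core_lemma {H : Type*} [NormedAddCommGroup H] [InnerProductSpace ℂ H]
    (J₀ : H →L[ℂ] H) (hinv : ∀ x, J₀ (J₀ x) = x)
    (hsa : ∀ x y : H, (inner ℂ (J₀ x) y : ℂ) = inner ℂ x (J₀ y))
    (u v : H) (hu : (inner ℂ u u : ℂ) = 1) (hv : (inner ℂ v v : ℂ) = 1)
    (huv : (inner ℂ u v : ℂ) = 0) (hJu : J₀ u = u) (hJv : J₀ v = -v)
    (t : ℝ) (ht0 : 0 < t) (ht1 : t ≤ 1) :
    ∃ J : H →L[ℂ] H, IsFundamentalSymmetry J₀ J ∧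
      ∀ y : H, kform J₀ (J y) y =
        inner ℂ y y
        + (((t + t⁻¹)/2 - 1 : ℝ) : ℂ) *
            ((starRingEnd ℂ) (inner ℂ u y) * inner ℂ u y + (starRingEnd ℂ) (inner ℂ v y) * inner ℂ v y)
        - (((t⁻¹ - t)/2 : ℝ) : ℂ) *
            ((starRingEnd ℂ) (inner ℂ u y) * inner ℂ v y + (starRingEnd ℂ) (inner ℂ v y) * inner ℂ u y) := by
  have ht : t ≠ 0 := ht0.ne'
  set c : ℝ := (t + t⁻¹)/2 - 1 with hc
  set sh : ℝ := (t⁻¹ - t)/2 with hsh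
  set J : H →L[ℂ] H := J₀ + (c : ℂ) • ((innerSL ℂ u).smulRight u)
      - (sh : ℂ) • ((innerSL ℂ v).smulRight u)
      + (sh : ℂ) • ((innerSL ℂ u).smulRight v)
      - (c : ℂ) • ((innerSL ℂ v).smulRight v) with hJdef
  have hvu : (inner ℂ v u : ℂ) = 0 := by rw [← inner_conj_symm, huv, map_zero]
  have hJapp : ∀ y : H, J y = J₀ y + ((c : ℂ) * inner ℂ u y - (sh : ℂ) * inner ℂ v y) • u
      + ((sh : ℂ) * inner ℂ u y - (c : ℂ) * inner ℂ v y) • v := by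
    intro y
    simp only [hJdef, ContinuousLinearMap.add_apply, ContinuousLinearMap.sub_apply,
      ContinuousLinearMap.smul_apply, ContinuousLinearMap.smulRight_apply, innerSL_apply_apply]
    module
  have hJ0u : ∀ y : H, (inner ℂ u (J₀ y) : ℂ) = inner ℂ u y := by
    intro y; rw [← hsa, hJu]
  have hJ0v : ∀ y : H, (inner ℂ v (J₀ y) : ℂ) = -inner ℂ v y := by
    intro y; rw [← hsa, hJv, inner_neg_left]
  have hJ0J : ∀ y : H, J₀ (J y) = y + ((c : ℂ) * inner ℂ u y - (sh : ℂ) * inner ℂ v y) • u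
      - ((sh : ℂ) * inner ℂ u y - (c : ℂ) * inner ℂ v y) • v := by
    intro y
    rw [hJapp, map_add, map_add, map_smul, map_smul, hJu, hJv, hinv]
    module
  have hαJ : ∀ y : H, (inner ℂ u (J y) : ℂ) = (1 + c) * inner ℂ u y - sh * inner ℂ v y := by
    intro y
    rw [hJapp, inner_add_right, inner_add_right, inner_smul_right, inner_smul_right,
      hJ0u, hu, huv]
    ring
  have hβJ : ∀ y : H, (inner ℂ v (J y) : ℂ) = (sh : ℂ) * inner ℂ u y - (1 + c) * inner ℂ v y := by
    intro y
    rw [hJapp, inner_add_right, inner_add_right, inner_smul_right, inner_smul_right,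
      hJ0v, hv, hvu]
    ring
  have hkeyR : c ^ 2 - sh ^ 2 + 2 * c = 0 := by
    rw [hc, hsh]
    field_simp
    ring
  have hkey : (c : ℂ) ^ 2 - (sh : ℂ) ^ 2 + 2 * c = 0 := by exact_mod_cast hkeyR
  have hinvol : ∀ y : H, J (J y) = y := by
    intro y
    rw [hJapp (J y), hJ0J y, hαJ y, hβJ y]
    match_scalars
    · linear_combination (0 : ℂ) * hkey
    · linear_combination (inner ℂ u y : ℂ) * hkey
    · linear_combination (inner ℂ v y : ℂ) * hkey
  have hsym : ∀ a b : H, kform J₀ (J a) b = kform J₀ a (J b) := by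
    intro a b
    have e1 : (inner ℂ (J₀ a) (J₀ b) : ℂ) = inner ℂ a b := by rw [hsa, hinv]
    have e2 : (inner ℂ (J₀ a) u : ℂ) = (starRingEnd ℂ) (inner ℂ u a) := by
      rw [hsa, hJu, ← inner_conj_symm]
    have e3 : (inner ℂ (J₀ a) v : ℂ) = -(starRingEnd ℂ) (inner ℂ v a) := by
      rw [hsa, hJv, inner_neg_right, ← inner_conj_symm]
    unfold kform
    rw [hJ0J a, hJapp b]
    simp only [inner_add_left, inner_sub_left, inner_smul_left, inner_add_right,
      inner_smul_right, e1, e2, e3, map_sub, map_mul, Complex.conj_ofReal]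
    ring
  have hval : ∀ y : H, kform J₀ (J y) y =
      inner ℂ y y + (c : ℂ) *
          ((starRingEnd ℂ) (inner ℂ u y) * inner ℂ u y + (starRingEnd ℂ) (inner ℂ v y) * inner ℂ v y)
        - (sh : ℂ) *
          ((starRingEnd ℂ) (inner ℂ u y) * inner ℂ v y + (starRingEnd ℂ) (inner ℂ v y) * inner ℂ u y) := by
    intro y
    unfold kform
    rw [hJ0J y]
    simp only [inner_add_left, inner_sub_left, inner_smul_left, map_sub, map_mul,
      Complex.conj_ofReal]
    ring
  refine ⟨J, ⟨hinvol, hsym, ?_⟩, hval⟩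
  intro y hy
  rw [hval y]
  set α : ℂ := inner ℂ u y with hα
  set β : ℂ := inner ℂ v y with hβ
  have hre : ((starRingEnd ℂ) α * β + (starRingEnd ℂ) β * α)
      = (2 * ((starRingEnd ℂ) α * β).re : ℝ) := by
    have : (starRingEnd ℂ) ((starRingEnd ℂ) α * β) = (starRingEnd ℂ) β * α := by
      simp [map_mul, mul_comm]
    push_cast
    rw [← this, Complex.add_conj]
    push_cast
    ring
  have hnsq : ∀ z : ℂ, (starRingEnd ℂ) z * z = (Complex.normSq z : ℝ) := by
    intro z
    rw [Complex.normSq_eq_conj_mul_self]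
  have hyy : (inner ℂ y y : ℂ) = ((‖y‖ ^ 2 : ℝ) : ℂ) := by
    exact_mod_cast inner_self_eq_norm_sq_to_K (𝕜 := ℂ) y
  rw [hyy, hnsq α, hnsq β, hre]
  have hcast : ((‖y‖ ^ 2 : ℝ) : ℂ) + (c : ℂ) * ((Complex.normSq α : ℝ) + (Complex.normSq β : ℝ))
      - (sh : ℂ) * ((2 * ((starRingEnd ℂ) α * β).re : ℝ))
      = ((‖y‖ ^ 2 + c * (Complex.normSq α + Complex.normSq β)
          - sh * (2 * ((starRingEnd ℂ) α * β).re) : ℝ) : ℂ) := by push_cast; ring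
  rw [hcast]
  rw [Complex.zero_lt_real]
  -- Bessel
  have hw : Orthonormal ℂ (![u, v]) := by
    rw [orthonormal_iff_ite]
    have hnu : ‖u‖ = 1 := by
      have h := inner_self_eq_norm_sq_to_K (𝕜 := ℂ) u
      rw [hu] at h
      have h' : ‖u‖ ^ 2 = 1 := by have h3 : ((‖u‖ : ℂ)) ^ 2 = 1 := h.symm; exact_mod_cast h3
      exact (pow_eq_one_iff_of_nonneg (norm_nonneg u) two_ne_zero).mp h'
    have hnv : ‖v‖ = 1 := by
      have h := inner_self_eq_norm_sq_to_K (𝕜 := ℂ) v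
      rw [hv] at h
      have h' : ‖v‖ ^ 2 = 1 := by have h3 : ((‖v‖ : ℂ)) ^ 2 = 1 := h.symm; exact_mod_cast h3
      exact (pow_eq_one_iff_of_nonneg (norm_nonneg v) two_ne_zero).mp h'
    intro i j
    fin_cases i <;> fin_cases j <;>
      simp [hu, hv, huv, hvu, hnu, hnv]
  have hbessel := hw.sum_inner_products_le y (s := Finset.univ)
  rw [Fin.sum_univ_two] at hbessel
  simp only [Matrix.cons_val_zero, Matrix.cons_val_one, Matrix.head_cons] at hbessel
  have hnormα : ‖α‖ ^ 2 = Complex.normSq α := by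
    rw [← Complex.sq_norm]
  have hnormβ : ‖β‖ ^ 2 = Complex.normSq β := by
    rw [← Complex.sq_norm]
  rw [← hα, ← hβ, hnormα, hnormβ] at hbessel
  have hRle : ((starRingEnd ℂ) α * β).re ≤ ‖α‖ * ‖β‖ := by
    calc ((starRingEnd ℂ) α * β).re ≤ ‖(starRingEnd ℂ) α * β‖ := Complex.re_le_norm _
      _ = ‖α‖ * ‖β‖ := by rw [norm_mul, Complex.norm_conj]
  have h2R : 2 * ((starRingEnd ℂ) α * β).re ≤ Complex.normSq α + Complex.normSq β := by
    have h1 := sq_nonneg (‖α‖ - ‖β‖)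
    have h2 : ‖α‖ ^ 2 = Complex.normSq α := Complex.sq_norm α
    have h3 : ‖β‖ ^ 2 = Complex.normSq β := Complex.sq_norm β
    nlinarith [hRle]
  have hsh0 : 0 ≤ sh := by
    have h1 : 1 ≤ t⁻¹ := (one_le_inv₀ ht0).mpr ht1
    rw [hsh]; linarith
  have hcs : c - sh = t - 1 := by rw [hc, hsh]; ring
  have hy2 : 0 < ‖y‖ ^ 2 := pow_pos (norm_pos_iff.mpr hy) 2
  have hS : Complex.normSq α + Complex.normSq β ≤ ‖y‖ ^ 2 := hbessel
  have hmul : sh * (2 * ((starRingEnd ℂ) α * β).re)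
      ≤ sh * (Complex.normSq α + Complex.normSq β) := mul_le_mul_of_nonneg_left h2R hsh0
  nlinarith [mul_nonneg (by linarith : (0:ℝ) ≤ 1 - t)
    (by linarith : (0:ℝ) ≤ ‖y‖ ^ 2 - (Complex.normSq α + Complex.normSq β)),
    mul_pos ht0 hy2]

lemma exists_J_le {H : Type*} [NormedAddCommGroup H] [InnerProductSpace ℂ H]
    (J₀ : H →L[ℂ] H) (hinv : ∀ x, J₀ (J₀ x) = x)
    (hsa : ∀ x y : H, (inner ℂ (J₀ x) y : ℂ) = inner ℂ x (J₀ y))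
    (z : H) (hz : z ≠ 0) (hneut : kform J₀ z z = 0) {ε : ℝ} (hε : 0 < ε) :
    ∃ J : H →L[ℂ] H, IsFundamentalSymmetry J₀ J ∧ jnorm J₀ J z ≤ ε := by
  set p : H := (1/2 : ℂ) • (z + J₀ z) with hp
  set m : H := (1/2 : ℂ) • (z - J₀ z) with hm
  have hJp : J₀ p = p := by
    rw [hp, map_smul, map_add, hinv, add_comm]
  have hJm : J₀ m = -m := by
    rw [hm, map_smul, map_sub, hinv]
    module
  have hz_eq : z = p + m := by rw [hp, hm]; module
  have hpm : (inner ℂ p m : ℂ) = 0 := by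
    have h1 : (inner ℂ p m : ℂ) = -inner ℂ p m := by
      conv_lhs => rw [← hJp]
      rw [hsa, hJm, inner_neg_right]
    linear_combination h1 / 2
  have hmp : (inner ℂ m p : ℂ) = 0 := by rw [← inner_conj_symm, hpm, map_zero]
  have hkz : kform J₀ z z = inner ℂ p p - inner ℂ m m := by
    unfold kform
    rw [hz_eq, map_add, hJp, hJm]
    simp only [inner_add_left, inner_add_right, inner_neg_left, hpm, hmp]
    ring
  have heq : (inner ℂ p p : ℂ) = inner ℂ m m := by
    have h2 := hneut
    rw [hkz] at h2
    linear_combination h2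
  have hp0 : p ≠ 0 := by
    intro h
    apply hz
    have hm0 : (inner ℂ m m : ℂ) = 0 := by rw [← heq, h, inner_zero_left]
    have hm' : m = 0 := inner_self_eq_zero.mp hm0
    rw [hz_eq, h, hm', add_zero]
  set r : ℝ := ‖p‖ with hr
  have hr0 : 0 < r := norm_pos_iff.mpr hp0
  have hrC : (r : ℂ) ≠ 0 := by exact_mod_cast hr0.ne'
  have hpp : (inner ℂ p p : ℂ) = ((r ^ 2 : ℝ) : ℂ) := by
    exact_mod_cast inner_self_eq_norm_sq_to_K (𝕜 := ℂ) p
  have hmm : (inner ℂ m m : ℂ) = ((r ^ 2 : ℝ) : ℂ) := by rw [← heq, hpp]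
  set u : H := ((r : ℂ)⁻¹) • p with hudef
  set v : H := ((r : ℂ)⁻¹) • m with hvdef
  have hu : (inner ℂ u u : ℂ) = 1 := by
    rw [hudef, inner_smul_left, inner_smul_right, hpp, map_inv₀, Complex.conj_ofReal]
    field_simp
    push_cast; ring
  have hv : (inner ℂ v v : ℂ) = 1 := by
    rw [hvdef, inner_smul_left, inner_smul_right, hmm, map_inv₀, Complex.conj_ofReal]
    field_simp
    push_cast; ring
  have huv : (inner ℂ u v : ℂ) = 0 := by
    rw [hudef, hvdef, inner_smul_left, inner_smul_right, hpm]
    ring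
  have hJu : J₀ u = u := by rw [hudef, map_smul, hJp]
  have hJv : J₀ v = -v := by rw [hvdef, map_smul, hJm]; module
  set t : ℝ := min 1 (ε ^ 2 / (2 * r ^ 2)) with htdef
  have ht0 : 0 < t := lt_min one_pos (by positivity)
  have ht1 : t ≤ 1 := min_le_left _ _
  obtain ⟨J, hfund, hval⟩ := core_lemma J₀ hinv hsa u v hu hv huv hJu hJv t ht0 ht1
  refine ⟨J, hfund, ?_⟩
  have hαz : (inner ℂ u z : ℂ) = ((r : ℝ) : ℂ) := by
    rw [hz_eq, hudef, inner_smul_left, inner_add_right, hpp, hpm, map_inv₀,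
      Complex.conj_ofReal]
    field_simp
    push_cast; ring
  have hβz : (inner ℂ v z : ℂ) = ((r : ℝ) : ℂ) := by
    rw [hz_eq, hvdef, inner_smul_left, inner_add_right, hmm, hmp, map_inv₀,
      Complex.conj_ofReal]
    field_simp
    push_cast; ring
  have hzz : (inner ℂ z z : ℂ) = ((2 * r ^ 2 : ℝ) : ℂ) := by
    rw [hz_eq]
    simp only [inner_add_left, inner_add_right, hpp, hmm, hpm, hmp]
    push_cast
    ring
  have hkval : kform J₀ (J z) z = ((2 * r ^ 2 * t : ℝ) : ℂ) := by
    rw [hval z, hαz, hβz, hzz, Complex.conj_ofReal]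
    have htC : ((t : ℝ) : ℂ) ≠ 0 := by exact_mod_cast ht0.ne'
    push_cast
    field_simp
    ring
  have hjn : jnorm J₀ J z = Real.sqrt (2 * r ^ 2 * t) := by
    unfold jnorm
    rw [hkval, Complex.ofReal_re]
  rw [hjn]
  have hle : 2 * r ^ 2 * t ≤ ε ^ 2 := by
    have h1 : t ≤ ε ^ 2 / (2 * r ^ 2) := min_le_right _ _
    have h2 : (0 : ℝ) < 2 * r ^ 2 := by positivity
    calc 2 * r ^ 2 * t ≤ 2 * r ^ 2 * (ε ^ 2 / (2 * r ^ 2)) :=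
          mul_le_mul_of_nonneg_left h1 h2.le
      _ = ε ^ 2 := by field_simp
  calc Real.sqrt (2 * r ^ 2 * t) ≤ Real.sqrt (ε ^ 2) := Real.sqrt_le_sqrt hle
    _ = ε := Real.sqrt_sq hε.le

theorem exists_fundamentalSymmetry_seq_jnorm_tendsto_zero
    {H : Type*} [NormedAddCommGroup H] [InnerProductSpace ℂ H] [CompleteSpace H]
    (J₀ : H →L[ℂ] H)
    (hinv : ∀ x, J₀ (J₀ x) = x)
    (hsa : ∀ x y : H, (inner ℂ (J₀ x) y : ℂ) = inner ℂ x (J₀ y))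
    (x : ℕ → H) (hx0 : ∀ n, x n ≠ 0) (hneutral : ∀ n, kform J₀ (x n) (x n) = 0) :
    ∃ J : ℕ → H →L[ℂ] H, (∀ n, IsFundamentalSymmetry J₀ (J n)) ∧
      Filter.Tendsto (fun n => jnorm J₀ (J n) (x n)) Filter.atTop (nhds 0) := by
  have hpos : ∀ n : ℕ, (0 : ℝ) < 1 / (n + 1) := fun n => by positivity
  choose J hJ hle using fun n =>
    exists_J_le J₀ hinv hsa (x n) (hx0 n) (hneutral n) (hpos n)
  refine ⟨J, hJ, ?_⟩
  refine squeeze_zero (fun n => Real.sqrt_nonneg _) hle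
    tendsto_one_div_add_atTop_nhds_zero_nat
end
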